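/- arXiv:1606.08383 — 3 statements merged into one kernel-verified Lean document; each statement's English description precedes it below -/
import Mathlib

section
/- The right twist preserves the positroid envelope: let M be the collection of k-element subsets J of {1, …, n} such that I→_a ≼_a J for every a ∈ {1, …, n} (J being compared after representing its elements in {a, …, a+n−1}). Then Δ_J(τ→(A)) = 0 for every k-element subset J ∉ M; consequently τ→(A) has rank k and, for every a, the a-minimal column basis of τ→(A) equals I→_a(A). -/
open scoped BigOperators

/-- The columns of `A` are `n`-periodic. -/
def ColPeriodic (k n : ℕ) (A : ℤ → Fin k → ℂ) : Prop :=
  ∀ a : ℤ, A (a + (n : ℤ)) = A a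

/-- `A` has rank `k`, i.e. its columns span `ℂ^k`. -/
def FullRank (k : ℕ) (A : ℤ → Fin k → ℂ) : Prop :=
  Submodule.span ℂ (Set.range A) = ⊤

/-- The Gale (componentwise) partial order on finite subsets of `ℤ` of equal
cardinality: `B ≼ C` iff they have the same cardinality and, for each `i`, the
`i`-th smallest element of `B` is at most the `i`-th smallest element of `C`
(equivalently, the counting condition below). -/
def galeLE (B C : Finset ℤ) : Prop :=
  B.card = C.card ∧
    ∀ t : ℤ, (B.filter fun x => t ≤ x).card ≤ (C.filter fun x => t ≤ x).card

/-- The columns of `A` indexed by `J` form a basis of `ℂ^k`. -/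
def IsColBasis (k : ℕ) (A : ℤ → Fin k → ℂ) (J : Finset ℤ) : Prop :=
  J.card = k ∧ LinearIndependent ℂ (fun j : (J : Set ℤ) => A (j : ℤ)) ∧
    Submodule.span ℂ (A '' (J : Set ℤ)) = ⊤

/-- `I` is the `≼_a`-minimal `k`-element subset of `{a, a+1, …, a+n-1}` whose
columns form a basis of `ℂ^k` (the `a`-minimal basis `I→_a`). -/
def IsMinBasis (k n : ℕ) (A : ℤ → Fin k → ℂ) (a : ℤ) (I : Finset ℤ) : Prop :=
  I ⊆ Finset.Ico a (a + (n : ℤ)) ∧ IsColBasis k A I ∧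
    ∀ J : Finset ℤ, J ⊆ Finset.Ico a (a + (n : ℤ)) → IsColBasis k A J → galeLE I J

/-- `I` is the `≼_{a+1}`-maximal `k`-element subset of `{a-n+1, …, a}` whose
columns form a basis of `ℂ^k` (the `a`-maximal basis `I←_a`).  Note that on
representatives in `{a-n+1, …, a}` the cyclic order `≺_{a+1}` agrees with the
usual order of `ℤ`. -/
def IsMaxBasis (k n : ℕ) (A : ℤ → Fin k → ℂ) (a : ℤ) (I : Finset ℤ) : Prop :=
  I ⊆ Finset.Ioc (a - (n : ℤ)) a ∧ IsColBasis k A I ∧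
    ∀ J : Finset ℤ, J ⊆ Finset.Ioc (a - (n : ℤ)) a → IsColBasis k A J → galeLE J I

/-- The standard symmetric bilinear form `⟨x|y⟩ = ∑ i, x i * y i` on `ℂ^k`. -/
noncomputable def bil (k : ℕ) (x y : Fin k → ℂ) : ℂ := ∑ i, x i * y i

/-- `π` is the bounded affine permutation of `A`:
`π a` is the least `r` with `a ≤ r ≤ a + n` and `A a ∈ span(A (a+1), …, A r)`. -/
def IsBAP (k n : ℕ) (A : ℤ → Fin k → ℂ) (π : ℤ → ℤ) : Prop :=
  ∀ a : ℤ,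
    a ≤ π a ∧ π a ≤ a + (n : ℤ) ∧
    A a ∈ Submodule.span ℂ (A '' Set.Ioc a (π a)) ∧
    ∀ r : ℤ, a ≤ r → r ≤ a + (n : ℤ) →
      A a ∈ Submodule.span ℂ (A '' Set.Ioc a r) → π a ≤ r

/-- `T` is the right twist `τ→(A)`: for each `a`, the column `T a` pairs to `1`
with `A a` and to `0` with the other columns of the `a`-minimal basis. -/
def IsRightTwist (k n : ℕ) (A T : ℤ → Fin k → ℂ) : Prop :=
  ∀ (a : ℤ) (I : Finset ℤ), IsMinBasis k n A a I →
    ∀ b ∈ I, bil k (T a) (A b) = if b = a then 1 else 0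

/-- `T` is the left twist `τ←(A)`: for each `a`, the column `T a` pairs to `1`
with `A a` and to `0` with the other columns of the `a`-maximal basis. -/
def IsLeftTwist (k n : ℕ) (A T : ℤ → Fin k → ℂ) : Prop :=
  ∀ (a : ℤ) (I : Finset ℤ), IsMaxBasis k n A a I →
    ∀ b ∈ I, bil k (T a) (A b) = if b = a then 1 else 0

/-- `Δ_I(A)`, where `I = {i 0 < i 1 < ⋯ < i (k-1)}` is given by a strictly
monotone enumeration `i : Fin k → ℤ`: the determinant of the `k×k` matrix with
columns `A (i 0), …, A (i (k-1))`. -/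
noncomputable def Delta (k : ℕ) (A : ℤ → Fin k → ℂ) (i : Fin k → ℤ) : ℂ :=
  Matrix.det (Matrix.of fun r s : Fin k => A (i s) r)

noncomputable section PT
namespace PT
open Submodule Module

variable {k n : ℕ}

attribute [local instance] Classical.propDecidable

/-- bil is linear in the first argument. -/
def phiL (k : ℕ) (y : Fin k → ℂ) : (Fin k → ℂ) →ₗ[ℂ] ℂ where
  toFun x := bil k x y
  map_add' x z := by simp [bil, add_mul, Finset.sum_add_distrib]
  map_smul' c x := by simp [bil, Finset.mul_sum, mul_assoc]

lemma bil_sub (x y z : Fin k → ℂ) : bil k (x - y) z = bil k x z - bil k y z := by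
  simp [bil, sub_mul, Finset.sum_sub_distrib]

lemma bil_single (x : Fin k → ℂ) (i : Fin k) : bil k x (Pi.single i 1) = x i := by
  simp [bil, Pi.single_apply]

/-- bil is linear in the second argument. -/
def phiR (k : ℕ) (x : Fin k → ℂ) : (Fin k → ℂ) →ₗ[ℂ] ℂ where
  toFun y := bil k x y
  map_add' y z := by simp [bil, mul_add, Finset.sum_add_distrib]
  map_smul' c y := by
    simp only [bil, Pi.smul_apply, smul_eq_mul, RingHom.id_apply, Finset.mul_sum]
    exact Finset.sum_congr rfl fun i _ => by ring

lemma eq_zero_of_bil {x : Fin k → ℂ} {s : Set (Fin k → ℂ)}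
    (hs : Submodule.span ℂ s = ⊤) (h : ∀ y ∈ s, bil k x y = 0) : x = 0 := by
  have hker : (⊤ : Submodule ℂ (Fin k → ℂ)) ≤ LinearMap.ker (phiR k x) := by
    rw [← hs]
    exact Submodule.span_le.mpr fun y hy => LinearMap.mem_ker.mpr (h y hy)
  funext i
  have := hker (Submodule.mem_top (x := Pi.single i 1))
  have h2 : bil k x (Pi.single i 1) = 0 := this
  have h3 : bil k x (Pi.single i 1) = x i := by simp [bil, Pi.single_apply]
  simp only [Pi.zero_apply]
  rw [← h3, h2]

lemma per_mul {A : ℤ → Fin k → ℂ} (hper : ColPeriodic k n A) :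
    ∀ (m : ℤ) (x : ℤ), A (x + m * n) = A x := by
  intro m
  induction m using Int.induction_on with
  | zero => simp
  | succ m ih =>
      intro x
      have h1 : x + ((m : ℤ) + 1) * n = (x + m * n) + n := by ring
      rw [h1, hper (x + m * n), ih]
  | pred m ih =>
      intro x
      have h1 : x + (-(m : ℤ) - 1) * n + n = x + (-(m : ℤ)) * n := by ring
      have := hper (x + (-(m : ℤ) - 1) * n)
      rw [h1] at this
      rw [← this]
      exact ih x

def pspan (k : ℕ) (A : ℤ → Fin k → ℂ) (a b : ℤ) : Submodule ℂ (Fin k → ℂ) :=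
  Submodule.span ℂ (A '' Set.Ico a b)

def G (k n : ℕ) (A : ℤ → Fin k → ℂ) (a : ℤ) : Finset ℤ :=
  (Finset.Ico a (a + (n : ℤ))).filter fun b => A b ∉ pspan k A a b

lemma mem_G {A : ℤ → Fin k → ℂ} {a b : ℤ} :
    b ∈ G k n A a ↔ (a ≤ b ∧ b < a + n) ∧ A b ∉ pspan k A a b := by
  simp [G, Finset.mem_filter, Finset.mem_Ico]

lemma G_subset {A : ℤ → Fin k → ℂ} {a : ℤ} : G k n A a ⊆ Finset.Ico a (a + (n : ℤ)) :=
  Finset.filter_subset _ _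

lemma pspan_mono_left {A : ℤ → Fin k → ℂ} {a a' b : ℤ} (h : a' ≤ a) :
    pspan k A a b ≤ pspan k A a' b :=
  Submodule.span_mono (Set.image_mono (Set.Ico_subset_Ico_left h))

lemma pspan_mono_right {A : ℤ → Fin k → ℂ} {a b b' : ℤ} (h : b ≤ b') :
    pspan k A a b ≤ pspan k A a b' :=
  Submodule.span_mono (Set.image_mono (Set.Ico_subset_Ico_right h))

lemma mem_G_of_le {A : ℤ → Fin k → ℂ} {a c i : ℤ} (hac : a ≤ c) (hci : c ≤ i)
    (hi : i ∈ G k n A a) : i ∈ G k n A c := by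
  rw [mem_G] at hi ⊢
  exact ⟨⟨hci, by omega⟩, fun h => hi.2 (pspan_mono_left hac h)⟩

lemma pspan_top {A : ℤ → Fin k → ℂ} (hper : ColPeriodic k n A) (hrank : FullRank k A)
    (hn : 0 < n) (a : ℤ) : pspan k A a (a + n) = ⊤ := by
  rw [eq_top_iff, ← hrank]
  apply Submodule.span_le.mpr
  rintro _ ⟨c, rfl⟩
  apply Submodule.subset_span
  have hn0 : (n : ℤ) ≠ 0 := by exact_mod_cast hn.ne'
  have hmod1 : 0 ≤ (c - a) % n := Int.emod_nonneg _ hn0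
  have hmod2 : (c - a) % n < n := Int.emod_lt_of_pos _ (by exact_mod_cast hn)
  refine ⟨a + (c - a) % n, ⟨by omega, by omega⟩, ?_⟩
  have hdiv := Int.emod_add_mul_ediv (c - a) (n : ℤ)
  have harg : (a + (c - a) % n) + ((c - a) / n) * n = c := by linear_combination hdiv
  calc A (a + (c - a) % n) = A ((a + (c - a) % n) + ((c - a) / n) * n) :=
        (per_mul hper _ _).symm
    _ = A c := by rw [harg]

lemma span_G_prefix {A : ℤ → Fin k → ℂ} (a : ℤ) :
    ∀ b, a ≤ b → b ≤ a + n →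
      Submodule.span ℂ (A '' (((G k n A a).filter (· < b)) : Set ℤ)) = pspan k A a b := by
  have main : ∀ m : ℕ, a + (m : ℤ) ≤ a + n →
      Submodule.span ℂ (A '' (((G k n A a).filter (· < a + (m : ℤ))) : Set ℤ))
        = pspan k A a (a + (m : ℤ)) := by
    intro m
    induction m with
    | zero =>
        intro _
        have h1 : (G k n A a).filter (· < a + ((0:ℕ) : ℤ)) = ∅ := by
          apply Finset.filter_false_of_mem
          intro x hx
          have := (mem_G.mp hx).1.1
          push_cast
          omega
        rw [h1]
        simp [pspan]
    | succ m ih =>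
        intro hb1
        have hmnn : (0 : ℤ) ≤ (m : ℤ) := Int.ofNat_nonneg m
        set b := a + (m : ℤ) with hbdef
        have hcast : a + ((m + 1 : ℕ) : ℤ) = b + 1 := by push_cast; ring
        rw [hcast] at hb1 ⊢
        have hab : a ≤ b := by omega
        have hb2 : b ≤ a + n := by omega
        have hico : Set.Ico a (b + 1) = insert b (Set.Ico a b) := by
          ext x; simp only [Set.mem_Ico, Set.mem_insert_iff]; omega
        have hps : pspan k A a (b + 1) = Submodule.span ℂ (insert (A b) (A '' Set.Ico a b)) := by
          rw [pspan, hico, Set.image_insert_eq]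
        by_cases hmem : A b ∈ pspan k A a b
        · have hbG : b ∉ G k n A a := by
            rw [mem_G]; push_neg; intro _; exact hmem
          have hfe : (G k n A a).filter (· < b + 1) = (G k n A a).filter (· < b) := by
            ext x
            simp only [Finset.mem_filter]
            constructor
            · rintro ⟨hx, hlt⟩
              refine ⟨hx, ?_⟩
              rcases lt_or_eq_of_le (by omega : x ≤ b) with h' | h'
              · exact h'
              · exact absurd (h' ▸ hx) hbG
            · rintro ⟨hx, hlt⟩; exact ⟨hx, by omega⟩
          rw [hfe, ih hb2, hps, Submodule.span_insert_eq_span hmem]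
          rfl
        · have hbG : b ∈ G k n A a := mem_G.mpr ⟨⟨hab, by omega⟩, hmem⟩
          have hfe : (G k n A a).filter (· < b + 1) = insert b ((G k n A a).filter (· < b)) := by
            ext x
            simp only [Finset.mem_filter, Finset.mem_insert]
            constructor
            · rintro ⟨hx, hlt⟩
              rcases lt_or_eq_of_le (by omega : x ≤ b) with h' | h'
              · exact Or.inr ⟨hx, h'⟩
              · exact Or.inl h'
            · rintro (rfl | ⟨hx, hlt⟩)
              · exact ⟨hbG, by omega⟩
              · exact ⟨hx, by omega⟩
          rw [hfe, hps, Finset.coe_insert, Set.image_insert_eq,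
            Submodule.span_insert, Submodule.span_insert]
          congr 1
          rw [ih hb2]
          rfl
  intro b hb1 hb2
  obtain ⟨m, hm⟩ : ∃ m : ℕ, b = a + (m : ℤ) :=
    ⟨(b - a).toNat, by omega⟩
  subst hm
  exact main m hb2

lemma li_of_lt_span {v : ℤ → Fin k → ℂ} {S : Finset ℤ}
    (h : ∀ j ∈ S, v j ∉ Submodule.span ℂ (v '' {c : ℤ | c ∈ S ∧ c < j})) :
    LinearIndependent ℂ (fun j : (S : Set ℤ) => v (j : ℤ)) := by
  rw [linearIndependent_iff']
  intro s g hsum x hx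
  by_contra hg
  set t := s.filter (fun y => g y ≠ 0) with ht
  have htne : t.Nonempty := ⟨x, by simp [ht, hx, hg]⟩
  obtain ⟨x₀, hx₀, hmax⟩ := t.exists_max_image (fun y => (y : ℤ)) htne
  have hg₀ : g x₀ ≠ 0 := (Finset.mem_filter.mp hx₀).2
  have hsum' : ∑ y ∈ t, g y • v (y : ℤ) = 0 := by
    rw [← hsum]
    apply Finset.sum_subset (Finset.filter_subset _ _)
    intro y hy hyn
    have : g y = 0 := by
      by_contra hgy
      exact hyn (Finset.mem_filter.mpr ⟨hy, hgy⟩)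
    simp [this]
  have hrw : g x₀ • v (x₀ : ℤ) = -∑ y ∈ t.erase x₀, g y • v (y : ℤ) := by
    have h2 := Finset.add_sum_erase t (fun y => g y • v (y : ℤ)) hx₀
    rw [← h2] at hsum'
    exact eq_neg_of_add_eq_zero_left hsum'
  have hmem : v (x₀ : ℤ) ∈ Submodule.span ℂ (v '' {c : ℤ | c ∈ S ∧ c < (x₀ : ℤ)}) := by
    have hv : v (x₀ : ℤ) = (g x₀)⁻¹ • (g x₀ • v (x₀ : ℤ)) := by
      rw [smul_smul, inv_mul_cancel₀ hg₀, one_smul]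
    rw [hv, hrw]
    apply Submodule.smul_mem
    apply Submodule.neg_mem
    apply Submodule.sum_mem
    intro y hy
    apply Submodule.smul_mem
    apply Submodule.subset_span
    have hyS : (y : ℤ) ∈ S := y.2
    have hyt : y ∈ t := Finset.mem_of_mem_erase hy
    have hyne : y ≠ x₀ := Finset.ne_of_mem_erase hy
    have hle : (y : ℤ) ≤ (x₀ : ℤ) := hmax y hyt
    have hlt : (y : ℤ) < (x₀ : ℤ) := by
      rcases lt_or_eq_of_le hle with h' | h'
      · exact h'
      · exact absurd (Subtype.ext h') hyne
    exact ⟨(y : ℤ), ⟨hyS, hlt⟩, rfl⟩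
  exact h (x₀ : ℤ) x₀.2 hmem

lemma card_le_finrank {v : ℤ → Fin k → ℂ} {S : Finset ℤ} {W : Submodule ℂ (Fin k → ℂ)}
    (hind : LinearIndependent ℂ (fun j : (S : Set ℤ) => v (j : ℤ)))
    (hmem : ∀ j ∈ S, v j ∈ W) : S.card ≤ finrank ℂ W := by
  have hindu : LinearIndependent ℂ
      (fun j : (S : Set ℤ) => (⟨v (j : ℤ), hmem (j : ℤ) j.2⟩ : W)) :=
    LinearIndependent.of_comp W.subtype hind
  have hcard := hindu.fintype_card_le_finrank
  have hc : Fintype.card (S : Set ℤ) = S.card :=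
    (Fintype.card_congr (Equiv.subtypeEquivRight (fun x => Finset.mem_coe))).trans
      (Fintype.card_coe S)
  omega

lemma li_G_subset {A : ℤ → Fin k → ℂ} {a : ℤ} {S : Finset ℤ} (hS : S ⊆ G k n A a) :
    LinearIndependent ℂ (fun j : (S : Set ℤ) => A (j : ℤ)) := by
  apply li_of_lt_span
  intro j hj
  have hjG := hS hj
  have hj2 := (mem_G.mp hjG).2
  intro hmem
  apply hj2
  refine pspan_mono_left (le_refl a) ?_
  refine Submodule.span_le.mpr ?_ hmem
  rintro _ ⟨c, ⟨hcS, hcj⟩, rfl⟩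
  apply Submodule.subset_span
  exact ⟨c, ⟨(mem_G.mp (hS hcS)).1.1, hcj⟩, rfl⟩

lemma finrank_pspan {A : ℤ → Fin k → ℂ} {a b : ℤ} (hb1 : a ≤ b) (hb2 : b ≤ a + n) :
    finrank ℂ (pspan k A a b) = ((G k n A a).filter (· < b)).card := by
  apply le_antisymm
  · rw [← span_G_prefix a b hb1 hb2]
    have himg : A '' (((G k n A a).filter (· < b)) : Set ℤ)
        = ((((G k n A a).filter (· < b)).image A : Finset (Fin k → ℂ)) : Set (Fin k → ℂ)) := by
      rw [Finset.coe_image]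
    rw [himg]
    exact le_trans (finrank_span_finset_le_card _) (Finset.card_image_le)
  · apply card_le_finrank (v := A)
    · exact li_G_subset (Finset.filter_subset _ _)
    · intro j hj
      rw [Finset.mem_filter] at hj
      apply Submodule.subset_span
      exact ⟨j, ⟨(mem_G.mp hj.1).1.1, hj.2⟩, rfl⟩

lemma G_filter_self {A : ℤ → Fin k → ℂ} {a : ℤ} :
    (G k n A a).filter (· < a + (n : ℤ)) = G k n A a := by
  apply Finset.filter_true_of_mem
  intro x hx
  exact (mem_G.mp hx).1.2

lemma G_card {A : ℤ → Fin k → ℂ} (hper : ColPeriodic k n A) (hrank : FullRank k A)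
    (hn : 0 < n) (a : ℤ) : (G k n A a).card = k := by
  have h1 := finrank_pspan (A := A) (a := a) (b := a + n) (by omega) (le_refl _)
  rw [G_filter_self, pspan_top hper hrank hn] at h1
  rw [← h1, finrank_top]
  simp [Module.finrank_pi]

lemma G_isColBasis {A : ℤ → Fin k → ℂ} (hper : ColPeriodic k n A) (hrank : FullRank k A)
    (hn : 0 < n) (a : ℤ) : IsColBasis k A (G k n A a) := by
  refine ⟨G_card hper hrank hn a, li_G_subset (le_refl _), ?_⟩
  have := span_G_prefix (A := A) a (a + n) (by omega) (le_refl _)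
  rw [G_filter_self] at this
  rw [this]
  exact pspan_top hper hrank hn a

lemma filter_split (D : Finset ℤ) (t : ℤ) :
    (D.filter (· < t)).card + (D.filter fun x => t ≤ x).card = D.card := by
  have h := Finset.card_filter_add_card_filter_not (s := D) (p := (· < t))
  have h2 : (D.filter fun x => ¬ (x < t)) = D.filter fun x => t ≤ x := by
    apply Finset.filter_congr
    intro x _
    simp [not_lt]
  rw [h2] at h
  exact h

lemma G_gale {A : ℤ → Fin k → ℂ} (hper : ColPeriodic k n A) (hrank : FullRank k A)
    (hn : 0 < n) (a : ℤ) (J : Finset ℤ) (hJ : J ⊆ Finset.Ico a (a + (n : ℤ)))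
    (hJb : IsColBasis k A J) : galeLE (G k n A a) J := by
  have hGcard := G_card hper hrank hn a
  have hJlt : ∀ x ∈ J, a ≤ x ∧ x < a + n := by
    intro x hx
    exact Finset.mem_Ico.mp (hJ hx)
  constructor
  · rw [hGcard, hJb.1]
  intro t
  have key : (J.filter (· < t)).card ≤ ((G k n A a).filter (· < t)).card := by
    rcases le_or_gt t a with hta | hat
    · have : J.filter (· < t) = ∅ := by
        apply Finset.filter_false_of_mem
        intro x hx
        have := (hJlt x hx).1
        omega
      simp [this]
    rcases le_or_gt t (a + n) with htn | hnt
    · -- main case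
      have hcard : (J.filter (· < t)).card ≤ finrank ℂ (pspan k A a t) := by
        apply card_le_finrank (v := A)
        · have hsub' : ((J.filter (· < t) : Finset ℤ) : Set ℤ) ⊆ (J : Set ℤ) := by
            intro x hx
            exact Finset.mem_coe.mpr (Finset.filter_subset _ _ (Finset.mem_coe.mp hx))
          exact hJb.2.1.comp (Set.inclusion hsub') (Set.inclusion_injective hsub')
        · intro j hj
          rw [Finset.mem_filter] at hj
          apply Submodule.subset_span
          exact ⟨j, ⟨(hJlt j hj.1).1, hj.2⟩, rfl⟩
      rw [← finrank_pspan (by omega : a ≤ t) htn]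
      exact hcard
    · have h1 : J.filter (· < t) = J := by
        apply Finset.filter_true_of_mem
        intro x hx
        have := (hJlt x hx).2
        omega
      have h2 : (G k n A a).filter (· < t) = G k n A a := by
        apply Finset.filter_true_of_mem
        intro x hx
        have := (mem_G.mp hx).1.2
        omega
      rw [h1, h2, hGcard, hJb.1]
  have e1 := filter_split (G k n A a) t
  have e2 := filter_split J t
  rw [hGcard] at e1
  rw [hJb.1] at e2
  omega

lemma gale_antisymm {B C : Finset ℤ} (h1 : galeLE B C) (h2 : galeLE C B) : B = C := by
  have hf : ∀ t, (B.filter fun x => t ≤ x).card = (C.filter fun x => t ≤ x).card :=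
    fun t => le_antisymm (h1.2 t) (h2.2 t)
  have key : ∀ (D : Finset ℤ) (x : ℤ),
      (D.filter fun y => x ≤ y).card = (D.filter fun y => x + 1 ≤ y).card
        + (if x ∈ D then 1 else 0) := by
    intro D x
    have hun : (D.filter fun y => x ≤ y)
        = (D.filter fun y => x + 1 ≤ y) ∪ (D.filter fun y => y = x) := by
      ext y
      simp only [Finset.mem_filter, Finset.mem_union]
      constructor
      · rintro ⟨hy, hxy⟩
        rcases eq_or_lt_of_le hxy with h' | h'
        · exact Or.inr ⟨hy, h'.symm⟩
        · exact Or.inl ⟨hy, by omega⟩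
      · rintro (⟨hy, hxy⟩ | ⟨hy, rfl⟩)
        · exact ⟨hy, by omega⟩
        · exact ⟨hy, le_refl _⟩
    have hdisj : Disjoint (D.filter fun y => x + 1 ≤ y) (D.filter fun y => y = x) := by
      rw [Finset.disjoint_left]
      intro y hy1 hy2
      rw [Finset.mem_filter] at hy1 hy2
      omega
    rw [hun, Finset.card_union_of_disjoint hdisj]
    congr 1
    rw [Finset.filter_eq']
    split <;> simp
  ext x
  have e1 := key B x
  have e2 := key C x
  have e3 := hf x
  have e4 := hf (x + 1)
  by_cases hb : x ∈ B <;> by_cases hc : x ∈ C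
  · exact iff_of_true hb hc
  · exfalso; rw [if_pos hb] at e1; rw [if_neg hc] at e2; omega
  · exfalso; rw [if_neg hb] at e1; rw [if_pos hc] at e2; omega
  · exact iff_of_false hb hc

lemma isMinBasis_iff {A : ℤ → Fin k → ℂ} (hper : ColPeriodic k n A) (hrank : FullRank k A)
    (hn : 0 < n) (a : ℤ) (I : Finset ℤ) :
    IsMinBasis k n A a I ↔ I = G k n A a := by
  constructor
  · rintro ⟨hsub, hbasis, hmin⟩
    exact gale_antisymm
      (hmin _ G_subset (G_isColBasis hper hrank hn a))
      (G_gale hper hrank hn a I hsub hbasis)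
  · rintro rfl
    exact ⟨G_subset, G_isColBasis hper hrank hn a,
      fun J hJ hJb => G_gale hper hrank hn a J hJ hJb⟩

section Twist

variable {A T : ℤ → Fin k → ℂ}

lemma orth (hper : ColPeriodic k n A) (hrank : FullRank k A) (hn : 0 < n)
    (hT : IsRightTwist k n A T) {a c i : ℤ} (hac : a ≤ c) (hci : c < i)
    (hi : i ∈ G k n A a) : bil k (T c) (A i) = 0 := by
  have hic : i ∈ G k n A c := mem_G_of_le hac (le_of_lt hci) hi
  have h := hT c (G k n A c) ((isMinBasis_iff hper hrank hn c _).mpr rfl) i hic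
  rw [if_neg (by omega)] at h
  exact h

lemma bil_T_self (hper : ColPeriodic k n A) (hrank : FullRank k A) (hn : 0 < n)
    (hT : IsRightTwist k n A T) {a c : ℤ} (hac : a ≤ c) (hc : c ∈ G k n A a) :
    bil k (T c) (A c) = 1 := by
  have hcc : c ∈ G k n A c := mem_G_of_le hac (le_refl c) hc
  have h := hT c (G k n A c) ((isMinBasis_iff hper hrank hn c _).mpr rfl) c hcc
  rw [if_pos rfl] at h
  exact h

lemma pspan_shift (hper : ColPeriodic k n A) (a b : ℤ) :
    pspan k A (a + n) (b + n) = pspan k A a b := by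
  unfold pspan
  have himg : A '' Set.Ico (a + (n : ℤ)) (b + n) = A '' Set.Ico a b := by
    ext y
    constructor
    · rintro ⟨x, hx, rfl⟩
      rw [Set.mem_Ico] at hx
      refine ⟨x - n, Set.mem_Ico.mpr ⟨by omega, by omega⟩, ?_⟩
      have h := hper (x - n)
      rw [show x - n + n = x by ring] at h
      exact h.symm
    · rintro ⟨x, hx, rfl⟩
      rw [Set.mem_Ico] at hx
      refine ⟨x + n, Set.mem_Ico.mpr ⟨by omega, by omega⟩, hper x⟩
  rw [himg]

lemma G_shift (hper : ColPeriodic k n A) {a b : ℤ} :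
    b ∈ G k n A (a + n) ↔ b - n ∈ G k n A a := by
  rw [mem_G, mem_G]
  have h1 : pspan k A (a + n) b = pspan k A a (b - n) := by
    have h := pspan_shift hper a (b - n)
    rw [show b - n + (n : ℤ) = b by ring] at h
    exact h
  have h2 : A b = A (b - n) := by
    have h := hper (b - n)
    rw [show b - n + (n : ℤ) = b by ring] at h
    exact h
  rw [h1, h2]
  constructor
  · rintro ⟨hb, hm⟩; exact ⟨⟨by omega, by omega⟩, hm⟩
  · rintro ⟨hb, hm⟩; exact ⟨⟨by omega, by omega⟩, hm⟩

lemma T_per (hper : ColPeriodic k n A) (hrank : FullRank k A) (hn : 0 < n)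
    (hT : IsRightTwist k n A T) : ColPeriodic k n T := by
  intro a
  have hGb := G_isColBasis hper hrank hn a
  have hkey : ∀ y ∈ A '' ((G k n A a : Finset ℤ) : Set ℤ),
      bil k (T (a + n) - T a) y = 0 := by
    rintro _ ⟨b, hb, rfl⟩
    have hbG : b ∈ G k n A a := Finset.mem_coe.mp hb
    have hb' : b + n ∈ G k n A (a + n) := by
      rw [G_shift hper]
      rw [show b + (n : ℤ) - n = b by ring]
      exact hbG
    have e1 := hT (a + n) (G k n A (a + n))
      ((isMinBasis_iff hper hrank hn (a + n) _).mpr rfl) (b + n) hb'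
    have e2 := hT a (G k n A a)
      ((isMinBasis_iff hper hrank hn a _).mpr rfl) b hbG
    rw [hper b] at e1
    have hif : (if b + (n : ℤ) = a + n then (1 : ℂ) else 0) = (if b = a then 1 else 0) := by
      by_cases h : b = a
      · rw [if_pos (by omega), if_pos h]
      · rw [if_neg (by omega), if_neg h]
    rw [hif] at e1
    rw [bil_sub, e1, e2, sub_self]
  have hz := eq_zero_of_bil hGb.2.2 hkey
  exact sub_eq_zero.mp hz

end Twist

def psi (k : ℕ) (A : ℤ → Fin k → ℂ) (S : Finset ℤ) :
    (Fin k → ℂ) →ₗ[ℂ] ({x // x ∈ S} → ℂ) where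
  toFun v := fun j => bil k v (A (j : ℤ))
  map_add' x y := by
    funext j
    simp [bil, add_mul, Finset.sum_add_distrib]
  map_smul' c x := by
    funext j
    simp only [bil, Pi.smul_apply, smul_eq_mul, RingHom.id_apply, Finset.mul_sum]
    exact Finset.sum_congr rfl fun i _ => by ring

lemma finrank_pi_coe (S : Finset ℤ) : finrank ℂ ({x // x ∈ S} → ℂ) = S.card := by
  rw [Module.finrank_pi]
  exact Fintype.card_coe S

lemma psi_inj {A : ℤ → Fin k → ℂ} (hper : ColPeriodic k n A) (hrank : FullRank k A)
    (hn : 0 < n) (a : ℤ) : Function.Injective (psi k A (G k n A a)) := by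
  rw [← LinearMap.ker_eq_bot]
  apply (Submodule.eq_bot_iff _).mpr
  intro v hv
  apply eq_zero_of_bil (G_isColBasis hper hrank hn a).2.2
  rintro _ ⟨b, hb, rfl⟩
  exact congrFun (LinearMap.mem_ker.mp hv) ⟨b, Finset.mem_coe.mp hb⟩

lemma psi_surj {A : ℤ → Fin k → ℂ} (hper : ColPeriodic k n A) (hrank : FullRank k A)
    (hn : 0 < n) {a : ℤ} {S : Finset ℤ} (hS : S ⊆ G k n A a) :
    Function.Surjective (psi k A S) := by
  have hinjE := psi_inj hper hrank hn a
  have hrange : LinearMap.range (psi k A (G k n A a)) = ⊤ := by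
    apply Submodule.eq_top_of_finrank_eq
    have hrn := LinearMap.finrank_range_add_finrank_ker (psi k A (G k n A a))
    rw [LinearMap.ker_eq_bot.mpr hinjE, finrank_bot] at hrn
    rw [finrank_pi_coe, G_card hper hrank hn a]
    have hdom : finrank ℂ (Fin k → ℂ) = k := by simp [Module.finrank_pi]
    omega
  intro g
  set g' : {x // x ∈ G k n A a} → ℂ :=
    fun j => if h : (j : ℤ) ∈ S then g ⟨(j : ℤ), h⟩ else 0 with hg'
  obtain ⟨v, hv⟩ := LinearMap.range_eq_top.mp hrange g'
  refine ⟨v, ?_⟩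
  funext j
  have h1 : psi k A S v j = psi k A (G k n A a) v ⟨(j : ℤ), hS j.2⟩ := rfl
  rw [h1, hv]
  show (if h : (j : ℤ) ∈ S then g ⟨(j : ℤ), h⟩ else 0) = g j
  rw [dif_pos j.2]

lemma finrank_ker_psi {A : ℤ → Fin k → ℂ} (hper : ColPeriodic k n A) (hrank : FullRank k A)
    (hn : 0 < n) {a : ℤ} {S : Finset ℤ} (hS : S ⊆ G k n A a) :
    finrank ℂ (LinearMap.ker (psi k A S)) + S.card = k := by
  have hrn := LinearMap.finrank_range_add_finrank_ker (psi k A S)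
  rw [LinearMap.range_eq_top.mpr (psi_surj hper hrank hn hS), finrank_top,
    finrank_pi_coe] at hrn
  have hdom : finrank ℂ (Fin k → ℂ) = k := by simp [Module.finrank_pi]
  omega

lemma pspanT_le_ker {A T : ℤ → Fin k → ℂ} (hper : ColPeriodic k n A) (hrank : FullRank k A)
    (hn : 0 < n) (hT : IsRightTwist k n A T) {a b : ℤ} :
    pspan k T a b ≤ LinearMap.ker (psi k A ((G k n A a).filter (fun x => b ≤ x))) := by
  apply Submodule.span_le.mpr
  rintro _ ⟨c, hc, rfl⟩
  rw [Set.mem_Ico] at hc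
  rw [SetLike.mem_coe, LinearMap.mem_ker]
  funext j
  have hj := Finset.mem_filter.mp j.2
  have hj1 : (j : ℤ) ∈ G k n A a := hj.1
  have hj2 : b ≤ (j : ℤ) := hj.2
  show bil k (T c) (A (j : ℤ)) = 0
  exact orth hper hrank hn hT hc.1 (by omega) hj1

lemma dims_eq {A T : ℤ → Fin k → ℂ} (hper : ColPeriodic k n A) (hrank : FullRank k A)
    (hn : 0 < n) (hT : IsRightTwist k n A T) {a b : ℤ} (hb1 : a ≤ b) (hb2 : b ≤ a + n) :
    finrank ℂ (pspan k T a b) = ((G k n A a).filter (· < b)).card := by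
  apply le_antisymm
  · have hle := Submodule.finrank_mono (pspanT_le_ker hper hrank hn hT (a := a) (b := b))
    have hker := finrank_ker_psi hper hrank hn
      (Finset.filter_subset (fun x => b ≤ x) (G k n A a))
    have hsplit := filter_split (G k n A a) b
    rw [G_card hper hrank hn a] at hsplit
    omega
  · apply card_le_finrank (v := T)
    · apply li_of_lt_span
      intro j hj
      have hjf := Finset.mem_filter.mp hj
      have hjG : j ∈ G k n A a := hjf.1
      have haj : a ≤ j := (mem_G.mp hjG).1.1
      intro hmem
      have hker : Submodule.span ℂ (T '' {c : ℤ | c ∈ (G k n A a).filter (· < b) ∧ c < j})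
          ≤ LinearMap.ker (phiL k (A j)) := by
        apply Submodule.span_le.mpr
        rintro _ ⟨c, ⟨hcf, hcj⟩, rfl⟩
        have hcG := (Finset.mem_filter.mp hcf).1
        have hac : a ≤ c := (mem_G.mp hcG).1.1
        rw [SetLike.mem_coe, LinearMap.mem_ker]
        exact orth hper hrank hn hT hac hcj hjG
      have h1 : phiL k (A j) (T j) = 0 := LinearMap.mem_ker.mp (hker hmem)
      have h2 : phiL k (A j) (T j) = 1 := bil_T_self hper hrank hn hT haj hjG
      exact one_ne_zero (h2.symm.trans h1)
    · intro j hj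
      have hjf := Finset.mem_filter.mp hj
      apply Submodule.subset_span
      exact ⟨j, Set.mem_Ico.mpr ⟨(mem_G.mp hjf.1).1.1, hjf.2⟩, rfl⟩

lemma notmem_iff_jump {M : ℤ → Fin k → ℂ} {a b : ℤ} (hab : a ≤ b) :
    M b ∉ pspan k M a b ↔ finrank ℂ (pspan k M a b) < finrank ℂ (pspan k M a (b + 1)) := by
  have hico : Set.Ico a (b + 1) = insert b (Set.Ico a b) := by
    ext x; simp only [Set.mem_Ico, Set.mem_insert_iff]; omega
  have hps : pspan k M a (b + 1) = Submodule.span ℂ (insert (M b) (M '' Set.Ico a b)) := by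
    rw [pspan, hico, Set.image_insert_eq]
  constructor
  · intro hmem
    apply Submodule.finrank_lt_finrank_of_lt
    apply lt_of_le_of_ne (pspan_mono_right (by omega))
    intro heq
    apply hmem
    rw [heq, hps]
    exact Submodule.subset_span (Set.mem_insert _ _)
  · intro hlt hmem
    rw [hps, Submodule.span_insert_eq_span hmem] at hlt
    exact lt_irrefl _ hlt

lemma G_T_eq {A T : ℤ → Fin k → ℂ} (hper : ColPeriodic k n A) (hrank : FullRank k A)
    (hn : 0 < n) (hT : IsRightTwist k n A T) (a : ℤ) : G k n T a = G k n A a := by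
  ext b
  rw [mem_G, mem_G]
  by_cases hb : a ≤ b ∧ b < a + n
  · have hiff : (T b ∉ pspan k T a b) ↔ (A b ∉ pspan k A a b) := by
      rw [notmem_iff_jump hb.1, notmem_iff_jump hb.1,
        dims_eq hper hrank hn hT hb.1 (by omega),
        dims_eq hper hrank hn hT (by omega : a ≤ b + 1) (by omega),
        finrank_pspan (n := n) hb.1 (by omega : b ≤ a + (n:ℤ)),
        finrank_pspan (n := n) (by omega : a ≤ b + 1) (by omega : b + 1 ≤ a + (n:ℤ))]
    constructor
    · rintro ⟨hbb, hm⟩; exact ⟨hbb, hiff.mp hm⟩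
    · rintro ⟨hbb, hm⟩; exact ⟨hbb, hiff.mpr hm⟩
  · constructor <;> (rintro ⟨h, _⟩; exact absurd h hb)

lemma fullRank_T {A T : ℤ → Fin k → ℂ} (hper : ColPeriodic k n A) (hrank : FullRank k A)
    (hn : 0 < n) (hT : IsRightTwist k n A T) : FullRank k T := by
  rw [FullRank, eq_top_iff]
  have htop : pspan k T 0 (0 + n) = ⊤ := by
    apply Submodule.eq_top_of_finrank_eq
    rw [dims_eq hper hrank hn hT (by omega) (le_refl _), G_filter_self,
      G_card hper hrank hn 0]
    simp [Module.finrank_pi]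
  rw [← htop]
  apply Submodule.span_le.mpr
  rintro _ ⟨c, _, rfl⟩
  exact Submodule.subset_span ⟨c, rfl⟩

end PT
end PT

/-- the right twist preserves the positroid envelope: let
`M` be the collection of `k`-element subsets `J` of `{1, …, n}` with
`I→_a ≼_a J` for every `a ∈ {1, …, n}` (comparing `J` after representing its
elements in `{a, …, a+n-1}`, i.e. replacing `j < a` by `j + n`).  Then
`Δ_J(τ→(A)) = 0` for every `k`-subset `J ∉ M`; consequently `τ→(A)` has rank
`k` and, for every `a`, the `a`-minimal column basis of `τ→(A)` equals
`I→_a(A)`. -/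
theorem twist_preserves_positroid
    (k n : ℕ) (hk : 1 ≤ k) (hkn : k ≤ n)
    (A : ℤ → Fin k → ℂ) (hper : ColPeriodic k n A) (hrank : FullRank k A)
    (T : ℤ → Fin k → ℂ) (hT : IsRightTwist k n A T) :
    (∀ i : Fin k → ℤ, StrictMono i →
      (Finset.image i Finset.univ : Finset ℤ) ⊆ Finset.Icc 1 (n : ℤ) →
      ¬ (∀ a ∈ Finset.Icc (1 : ℤ) (n : ℤ), ∀ Ia : Finset ℤ,
          IsMinBasis k n A a Ia →
          galeLE Ia ((Finset.image i Finset.univ).image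
            (fun j => if j < a then j + (n : ℤ) else j))) →
      Delta k T i = 0) ∧
    FullRank k T ∧
    (∀ (a : ℤ) (Ia : Finset ℤ), IsMinBasis k n A a Ia ↔ IsMinBasis k n T a Ia) := by
  classical
  have hn : 0 < n := lt_of_lt_of_le hk hkn
  have hfull : FullRank k T := PT.fullRank_T hper hrank hn hT
  have hperT : ColPeriodic k n T := PT.T_per hper hrank hn hT
  refine ⟨?_, hfull, ?_⟩
  · -- vanishing
    intro i hmono hsub hfail
    push_neg at hfail
    obtain ⟨a, ha, Ia, hIa, hng⟩ := hfail
    rw [Finset.mem_Icc] at ha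
    rw [PT.isMinBasis_iff hper hrank hn] at hIa
    subst hIa
    set shift : ℤ → ℤ := fun j => if j < a then j + (n : ℤ) else j with hshift
    set J := Finset.image i Finset.univ with hJ
    set Ja := J.image shift with hJa
    have hbounds : ∀ j ∈ J, 1 ≤ j ∧ j ≤ n := by
      intro j hj
      exact Finset.mem_Icc.mp (hsub hj)
    have hJcard : J.card = k := by
      rw [hJ, Finset.card_image_of_injective _ hmono.injective, Finset.card_univ,
        Fintype.card_fin]
    have hshiftInj : Set.InjOn shift J := by
      intro x hx y hy hxy
      have hbx := hbounds x hx
      have hby := hbounds y hy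
      simp only [hshift] at hxy
      split_ifs at hxy <;> omega
    have hJacard : Ja.card = k := by
      rw [hJa, Finset.card_image_of_injOn hshiftInj, hJcard]
    have hGcard : (PT.G k n A a).card = k := PT.G_card hper hrank hn a
    -- extract a failing threshold t
    rw [galeLE] at hng
    push_neg at hng
    obtain ⟨t, ht⟩ := hng (by rw [hGcard, hJacard])
    have e1 := PT.filter_split (PT.G k n A a) t
    have e2 := PT.filter_split Ja t
    rw [hGcard] at e1
    rw [hJacard] at e2
    have hcnt : ((PT.G k n A a).filter (· < t)).card < (Ja.filter (· < t)).card := by omega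
    -- the subtype of indices landing below t
    set P : Fin k → Prop := fun s => shift (i s) < t with hP
    have hJaim : Ja = Finset.image (fun s => shift (i s)) Finset.univ := by
      rw [hJa, hJ, Finset.image_image]
      rfl
    have hfilim : Ja.filter (· < t)
        = Finset.image (fun s => shift (i s)) (Finset.univ.filter P) := by
      rw [hJaim, Finset.filter_image]
    have hcardP : (Ja.filter (· < t)).card = (Finset.univ.filter P).card := by
      rw [hfilim]
      apply Finset.card_image_of_injOn
      intro x hx y hy hxy
      have hxJ : i x ∈ J := by rw [hJ]; exact Finset.mem_image_of_mem i (Finset.mem_univ x)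
      have hyJ : i y ∈ J := by rw [hJ]; exact Finset.mem_image_of_mem i (Finset.mem_univ y)
      exact hmono.injective (hshiftInj hxJ hyJ hxy)
    -- the kernel subspace
    set S := (PT.G k n A a).filter (fun x => t ≤ x) with hS
    set W := LinearMap.ker (PT.psi k A S) with hW
    have hkerdim : Module.finrank ℂ W + S.card = k :=
      PT.finrank_ker_psi hper hrank hn (Finset.filter_subset _ _)
    have hWdim : Module.finrank ℂ W = ((PT.G k n A a).filter (· < t)).card := by omega
    -- each relevant column lies in W
    have hmemW : ∀ s : Fin k, P s → T (i s) ∈ W := by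
      intro s hs
      have hiJ : i s ∈ J := by rw [hJ]; exact Finset.mem_image_of_mem i (Finset.mem_univ s)
      have hbs := hbounds _ hiJ
      have hTc : T (shift (i s)) = T (i s) := by
        simp only [hshift]
        split_ifs with h
        · exact hperT (i s)
        · rfl
      have hac : a ≤ shift (i s) := by simp only [hshift]; split_ifs <;> omega
      rw [hW, LinearMap.mem_ker]
      funext j
      have hj := Finset.mem_filter.mp j.2
      show bil k (T (i s)) (A (j : ℤ)) = 0
      rw [← hTc]
      exact PT.orth hper hrank hn hT hac (by omega : shift (i s) < (j : ℤ)) hj.1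
    -- too many vectors in a small subspace
    have hnind : ¬ LinearIndependent ℂ (fun s : {s : Fin k // P s} => T (i s.1)) := by
      intro hind
      have hindW : LinearIndependent ℂ
          (fun s : {s : Fin k // P s} => (⟨T (i s.1), hmemW s.1 s.2⟩ : W)) :=
        LinearIndependent.of_comp W.subtype hind
      have hle := hindW.fintype_card_le_finrank
      rw [Fintype.card_subtype] at hle
      have hle2 : (Finset.univ.filter P).card ≤ Module.finrank ℂ W := hle
      omega
    rw [Fintype.not_linearIndependent_iff] at hnind
    obtain ⟨g, hgsum, s₀, hg₀⟩ := hnind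
    set v : Fin k → ℂ := fun s => if h : P s then g ⟨s, h⟩ else 0 with hv
    have hvne : v ≠ 0 := by
      intro h0
      apply hg₀
      have := congrFun h0 s₀.1
      rw [hv] at this
      simp only [dif_pos s₀.2] at this
      rwa [Subtype.eta] at this
    have hmv : (Matrix.of fun r s : Fin k => T (i s) r).mulVec v = 0 := by
      funext r
      show (∑ s, (Matrix.of fun r s : Fin k => T (i s) r) r s * v s) = 0
      have hsplit := Finset.sum_filter_add_sum_filter_not Finset.univ P
        (fun s => (Matrix.of fun r s : Fin k => T (i s) r) r s * v s)
      rw [← hsplit]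
      have hzero : ∑ s ∈ Finset.univ.filter (fun s => ¬ P s),
          (Matrix.of fun r s : Fin k => T (i s) r) r s * v s = 0 := by
        apply Finset.sum_eq_zero
        intro s hs
        have := (Finset.mem_filter.mp hs).2
        rw [hv]
        simp [dif_neg this]
      rw [hzero, add_zero]
      have hmain : ∑ s ∈ Finset.univ.filter P,
          (Matrix.of fun r s : Fin k => T (i s) r) r s * v s
          = ∑ s : {s : Fin k // P s}, g s * T (i s.1) r := by
        rw [Finset.sum_subtype (p := P) (Finset.univ.filter P)
          (fun s => by simp) (fun s => (Matrix.of fun r s : Fin k => T (i s) r) r s * v s)]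
        apply Finset.sum_congr rfl
        intro s _
        rw [hv]
        simp only [Matrix.of_apply, dif_pos s.2, Subtype.eta]
        ring
      rw [hmain]
      have := congrFun hgsum r
      simpa [Finset.sum_apply] using this
    have hdet : (Matrix.of fun r s : Fin k => T (i s) r).det = 0 :=
      Matrix.exists_mulVec_eq_zero_iff.mp ⟨v, hvne, hmv⟩
    exact hdet
  · intro a Ia
    rw [PT.isMinBasis_iff hper hrank hn, PT.isMinBasis_iff hperT hfull hn,
      PT.G_T_eq hper hrank hn hT]
end

section
/- The left and right twists are mutually inverse: for every k×n complex matrix A of rank k, τ→(τ←(A)) = A and τ←(τ→(A)) = A. -/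
open scoped BigOperators

namespace Twist

open Finset Submodule Module

variable {k n : ℕ}

/-- The standard bilinear form as a `BilinForm`. -/
noncomputable def bform (k : ℕ) : LinearMap.BilinForm ℂ (Fin k → ℂ) :=
  LinearMap.mk₂ ℂ (fun x y => ∑ i, x i * y i)
    (by intro x x' y; simp [add_mul, Finset.sum_add_distrib])
    (by intro c x y; simp [Finset.mul_sum, mul_assoc])
    (by intro x y y'; simp [mul_add, Finset.sum_add_distrib])
    (by intro c x y; simp [Finset.mul_sum, mul_left_comm])

lemma bil_eq_bform (x y : Fin k → ℂ) : bil k x y = bform k x y := rfl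

lemma bil_comm (x y : Fin k → ℂ) : bil k x y = bil k y x := by
  simp [bil, mul_comm]

lemma bil_single (x : Fin k → ℂ) (i : Fin k) : bil k x (Pi.single i 1) = x i := by
  simp [bil, Pi.single_apply, mul_ite, Finset.sum_ite_eq]

lemma bil_eq_zero_of_forall (x : Fin k → ℂ) (h : ∀ y, bil k x y = 0) : x = 0 := by
  funext i
  have := h (Pi.single i 1)
  rw [bil_single] at this
  simpa using this

lemma bform_nondeg : (bform k).Nondegenerate := by
  exact ⟨fun x h => bil_eq_zero_of_forall x h,
    fun y h => bil_eq_zero_of_forall y (fun x => by rw [bil_comm]; exact h x)⟩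

lemma bform_refl : (bform k).IsRefl := by
  intro x y h
  rw [← bil_eq_bform] at h ⊢
  rw [bil_comm]; exact h

/-- Span of the columns of `A` indexed by a finite set. -/
noncomputable def spA (k : ℕ) (A : ℤ → Fin k → ℂ) (S : Finset ℤ) : Submodule ℂ (Fin k → ℂ) :=
  Submodule.span ℂ (A '' (S : Set ℤ))

lemma spA_mono {A : ℤ → Fin k → ℂ} {S T : Finset ℤ} (h : S ⊆ T) : spA k A S ≤ spA k A T :=
  Submodule.span_mono (Set.image_mono h)

lemma mem_spA {A : ℤ → Fin k → ℂ} {S : Finset ℤ} {b : ℤ} (h : b ∈ S) : A b ∈ spA k A S :=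
  Submodule.subset_span ⟨b, by simpa using h, rfl⟩

lemma bil_eq_zero_of_mem_spA {A : ℤ → Fin k → ℂ} {S : Finset ℤ} {x y : Fin k → ℂ}
    (hy : y ∈ spA k A S) (h : ∀ b ∈ S, bil k x (A b) = 0) : bil k x y = 0 := by
  rw [bil_eq_bform]
  have : spA k A S ≤ LinearMap.ker (bform k x) := by
    rw [spA, Submodule.span_le]
    rintro _ ⟨b, hb, rfl⟩
    simpa [LinearMap.mem_ker, ← bil_eq_bform] using h b (by simpa using hb)
  simpa [LinearMap.mem_ker] using this hy

/-- Key: membership with explicit coefficients. -/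
lemma mem_spA_iff {A : ℤ → Fin k → ℂ} {S : Finset ℤ} {x : Fin k → ℂ} :
    x ∈ spA k A S ↔ ∃ c : ℤ → ℂ, ∑ i ∈ S, c i • A i = x := by
  constructor
  · intro hx
    rw [spA, Set.image_eq_range] at hx
    rw [mem_span_range_iff_exists_fun] at hx
    obtain ⟨c, hc⟩ := hx
    classical
    refine ⟨fun i => if h : i ∈ S then c ⟨i, h⟩ else 0, ?_⟩
    rw [← hc, ← Finset.sum_coe_sort S (fun i => (if h : (i:ℤ) ∈ S then c ⟨i, h⟩ else 0) • A i)]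
    apply Finset.sum_congr rfl
    intro i _
    simp
  · rintro ⟨c, rfl⟩
    exact Submodule.sum_mem _ fun i hi => Submodule.smul_mem _ _ (mem_spA hi)

lemma bil_sum (x : Fin k → ℂ) (S : Finset ℤ) (c : ℤ → ℂ) (v : ℤ → Fin k → ℂ) :
    bil k x (∑ i ∈ S, c i • v i) = ∑ i ∈ S, c i * bil k x (v i) := by
  simp only [bil_eq_bform]
  rw [map_sum]
  simp [bil_eq_bform]

end Twist
namespace Twist

open Finset Submodule Module

variable {k n : ℕ}

/-- Abbreviation for the independence statement used in `IsColBasis`. -/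
def IndepOn (k : ℕ) (A : ℤ → Fin k → ℂ) (S : Finset ℤ) : Prop :=
  LinearIndependent ℂ (fun j : (S : Set ℤ) => A (j : ℤ))

lemma IndepOn.subset {A : ℤ → Fin k → ℂ} {S T : Finset ℤ} (h : IndepOn k A T) (hs : S ⊆ T) :
    IndepOn k A S := by
  have : (fun j : (S : Set ℤ) => A (j : ℤ)) =
      (fun j : (T : Set ℤ) => A (j : ℤ)) ∘ (fun j : (S : Set ℤ) => (⟨(j : ℤ), by
        simpa using hs (by simpa using j.2)⟩ : (T : Set ℤ))) := rfl
  rw [IndepOn, this]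
  exact h.comp _ (fun a b hab => by
    apply Subtype.ext
    simpa using congrArg Subtype.val hab)

lemma indepOn_of_not_mem_span_lt {A : ℤ → Fin k → ℂ} {S : Finset ℤ}
    (h : ∀ i ∈ S, A i ∉ spA k A (S.filter (fun x => x < i))) : IndepOn k A S := by
  classical
  rw [IndepOn, Fintype.linearIndependent_iff]
  intro g hg
  set g' : ℤ → ℂ := fun i => if h : i ∈ S then g ⟨i, by simpa using h⟩ else 0 with hg'
  have hsum : ∑ i ∈ S, g' i • A i = 0 := by
    rw [← Finset.sum_coe_sort S (fun i => g' i • A i)]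
    rw [← hg]
    apply Finset.sum_congr rfl
    intro i _
    simp [hg', i.2, (by simpa using i.2 : (i : ℤ) ∈ S)]
  by_contra hc
  push_neg at hc
  obtain ⟨j, hj⟩ := hc
  have hP : (S.filter (fun i => g' i ≠ 0)).Nonempty := by
    refine ⟨j, Finset.mem_filter.2 ⟨by simpa using j.2, ?_⟩⟩
    simpa [hg', (by simpa using j.2 : (j : ℤ) ∈ S)] using hj
  set i0 := (S.filter (fun i => g' i ≠ 0)).max' hP with hi0
  have hi0mem := (S.filter (fun i => g' i ≠ 0)).max'_mem hP
  rw [← hi0, Finset.mem_filter] at hi0mem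
  obtain ⟨hi0S, hi0ne⟩ := hi0mem
  have herase : g' i0 • A i0 + ∑ i ∈ S.erase i0, g' i • A i = 0 := by
    exact (Finset.add_sum_erase S (fun i => g' i • A i) hi0S).trans hsum
  have hmem : A i0 ∈ spA k A (S.filter (fun x => x < i0)) := by
    have : A i0 = (g' i0)⁻¹ • (-(∑ i ∈ S.erase i0, g' i • A i)) := by
      rw [eq_inv_smul_iff₀ hi0ne]
      rw [eq_neg_iff_add_eq_zero]
      exact herase
    rw [this]
    apply Submodule.smul_mem
    apply Submodule.neg_mem
    apply Submodule.sum_mem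
    intro i hi
    rcases eq_or_ne (g' i) 0 with h0 | h0
    · simp [h0]
    · apply Submodule.smul_mem
      apply mem_spA
      rw [Finset.mem_filter]
      refine ⟨Finset.mem_of_mem_erase hi, ?_⟩
      have hle : i ≤ i0 := hi0 ▸ Finset.le_max' _ _ (Finset.mem_filter.2 ⟨Finset.mem_of_mem_erase hi, h0⟩)
      exact lt_of_le_of_ne hle (Finset.ne_of_mem_erase hi)
  exact h i0 hi0S hmem

lemma indepOn_of_not_mem_span_gt {A : ℤ → Fin k → ℂ} {S : Finset ℤ}
    (h : ∀ i ∈ S, A i ∉ spA k A (S.filter (fun x => i < x))) : IndepOn k A S := by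
  classical
  rw [IndepOn, Fintype.linearIndependent_iff]
  intro g hg
  set g' : ℤ → ℂ := fun i => if h : i ∈ S then g ⟨i, by simpa using h⟩ else 0 with hg'
  have hsum : ∑ i ∈ S, g' i • A i = 0 := by
    rw [← Finset.sum_coe_sort S (fun i => g' i • A i)]
    rw [← hg]
    apply Finset.sum_congr rfl
    intro i _
    simp [hg', i.2, (by simpa using i.2 : (i : ℤ) ∈ S)]
  by_contra hc
  push_neg at hc
  obtain ⟨j, hj⟩ := hc
  have hP : (S.filter (fun i => g' i ≠ 0)).Nonempty := by
    refine ⟨j, Finset.mem_filter.2 ⟨by simpa using j.2, ?_⟩⟩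
    simpa [hg', (by simpa using j.2 : (j : ℤ) ∈ S)] using hj
  set i0 := (S.filter (fun i => g' i ≠ 0)).min' hP with hi0
  have hi0mem := (S.filter (fun i => g' i ≠ 0)).min'_mem hP
  rw [← hi0, Finset.mem_filter] at hi0mem
  obtain ⟨hi0S, hi0ne⟩ := hi0mem
  have herase : g' i0 • A i0 + ∑ i ∈ S.erase i0, g' i • A i = 0 := by
    exact (Finset.add_sum_erase S (fun i => g' i • A i) hi0S).trans hsum
  have hmem : A i0 ∈ spA k A (S.filter (fun x => i0 < x)) := by
    have : A i0 = (g' i0)⁻¹ • (-(∑ i ∈ S.erase i0, g' i • A i)) := by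
      rw [eq_inv_smul_iff₀ hi0ne]
      rw [eq_neg_iff_add_eq_zero]
      exact herase
    rw [this]
    apply Submodule.smul_mem
    apply Submodule.neg_mem
    apply Submodule.sum_mem
    intro i hi
    rcases eq_or_ne (g' i) 0 with h0 | h0
    · simp [h0]
    · apply Submodule.smul_mem
      apply mem_spA
      rw [Finset.mem_filter]
      refine ⟨Finset.mem_of_mem_erase hi, ?_⟩
      have hle : i0 ≤ i := hi0 ▸ Finset.min'_le _ _ (Finset.mem_filter.2 ⟨Finset.mem_of_mem_erase hi, h0⟩)
      exact lt_of_le_of_ne hle (Ne.symm (Finset.ne_of_mem_erase hi))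
  exact h i0 hi0S hmem

lemma finrank_spA_of_indep {A : ℤ → Fin k → ℂ} {S : Finset ℤ} (h : IndepOn k A S) :
    finrank ℂ (spA k A S) = S.card := by
  rw [spA, Set.image_eq_range, finrank_span_eq_card h]
  simp

lemma card_le_finrank_of_indep_le {A : ℤ → Fin k → ℂ} {S : Finset ℤ}
    {U : Submodule ℂ (Fin k → ℂ)} (h : IndepOn k A S) (hle : spA k A S ≤ U) :
    S.card ≤ finrank ℂ U := by
  rw [← finrank_spA_of_indep h]
  exact Submodule.finrank_mono hle

lemma card_le_k_of_indep {A : ℤ → Fin k → ℂ} {S : Finset ℤ} (h : IndepOn k A S) :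
    S.card ≤ k := by
  have := card_le_finrank_of_indep_le h (le_top (a := spA k A S))
  simpa using this

lemma spA_eq_top_of_indep_card {A : ℤ → Fin k → ℂ} {S : Finset ℤ} (h : IndepOn k A S)
    (hcard : S.card = k) : spA k A S = ⊤ := by
  apply Submodule.eq_top_of_finrank_eq
  rw [finrank_spA_of_indep h, hcard]
  simp

end Twist
namespace Twist

open Finset Submodule Module

variable {k n : ℕ}

lemma spA_insert (A : ℤ → Fin k → ℂ) (t : ℤ) (S : Finset ℤ) :
    spA k A (insert t S) = (Submodule.span ℂ {A t}) ⊔ spA k A S := by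
  rw [spA, Finset.coe_insert, Set.image_insert_eq, Submodule.span_insert, spA]

lemma per_mul {A : ℤ → Fin k → ℂ} (hper : ColPeriodic k n A) (m b : ℤ) :
    A (b + n * m) = A b := by
  induction m using Int.induction_on with
  | zero => simp
  | succ i IH =>
    have := hper (b + n * i)
    rw [show b + (n:ℤ) * (i + 1) = b + n * i + n by ring]
    rw [this, IH]
  | pred i IH =>
    have := hper (b + n * (-i - 1))
    rw [show b + (n:ℤ) * (-i - 1) + n = b + n * (-i) by ring] at this
    rw [← this]
    exact IH

lemma window_top {A : ℤ → Fin k → ℂ} (hper : ColPeriodic k n A) (hrank : FullRank k A)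
    (hn : 0 < n) (a : ℤ) : spA k A (Finset.Ico a (a + (n:ℤ))) = ⊤ := by
  rw [eq_top_iff, ← hrank, Submodule.span_le]
  rintro _ ⟨b, rfl⟩
  have hn0 : (n:ℤ) ≠ 0 := by exact_mod_cast hn.ne'
  set r := (b - a) % (n:ℤ) with hr
  have hr0 : 0 ≤ r := Int.emod_nonneg _ hn0
  have hrn : r < n := Int.emod_lt_of_pos _ (by exact_mod_cast hn)
  have hb' : A (a + r) = A b := by
    have : a + r = b + (n:ℤ) * (-((b - a) / (n:ℤ))) := by
      rw [hr, Int.emod_def]; ring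
    rw [this, per_mul hper]
  rw [← hb']
  exact mem_spA (by simp [Finset.mem_Ico]; omega)

lemma window_top' {A : ℤ → Fin k → ℂ} (hper : ColPeriodic k n A) (hrank : FullRank k A)
    (hn : 0 < n) (a : ℤ) : spA k A (Finset.Ioc (a - (n:ℤ)) a) = ⊤ := by
  have : Finset.Ioc (a - (n:ℤ)) a = Finset.Ico (a - n + 1) ((a - n + 1) + (n:ℤ)) := by
    ext x; simp [Finset.mem_Ico, Finset.mem_Ioc]; omega
  rw [this, window_top hper hrank hn]

open Classical in
/-- The forward greedy basis on the window `[a, a+n)`. -/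
noncomputable def Gr (k n : ℕ) (A : ℤ → Fin k → ℂ) (a : ℤ) : Finset ℤ :=
  (Finset.Ico a (a + (n:ℤ))).filter (fun m => A m ∉ spA k A (Finset.Ico a m))

open Classical in
/-- The backward greedy basis on the window `(a-n, a]`. -/
noncomputable def Kr (k n : ℕ) (A : ℤ → Fin k → ℂ) (a : ℤ) : Finset ℤ :=
  (Finset.Ioc (a - (n:ℤ)) a).filter (fun i => A i ∉ spA k A (Finset.Ioc i a))

lemma mem_Gr {A : ℤ → Fin k → ℂ} {a m : ℤ} :
    m ∈ Gr k n A a ↔ (m ∈ Finset.Ico a (a + (n:ℤ)) ∧ A m ∉ spA k A (Finset.Ico a m)) := by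
  classical
  simp [Gr]

lemma mem_Kr {A : ℤ → Fin k → ℂ} {a i : ℤ} :
    i ∈ Kr k n A a ↔ (i ∈ Finset.Ioc (a - (n:ℤ)) a ∧ A i ∉ spA k A (Finset.Ioc i a)) := by
  classical
  simp [Kr]

lemma Gr_subset {A : ℤ → Fin k → ℂ} {a : ℤ} : Gr k n A a ⊆ Finset.Ico a (a + (n:ℤ)) :=
  fun _ hx => (mem_Gr.1 hx).1

lemma Kr_subset {A : ℤ → Fin k → ℂ} {a : ℤ} : Kr k n A a ⊆ Finset.Ioc (a - (n:ℤ)) a :=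
  fun _ hx => (mem_Kr.1 hx).1

lemma Gr_span {A : ℤ → Fin k → ℂ} (a : ℤ) :
    ∀ t, a ≤ t → t ≤ a + (n:ℤ) →
      spA k A ((Gr k n A a).filter (fun x => x < t)) = spA k A (Finset.Ico a t) := by
  classical
  intro t ht
  refine Int.le_induction (motive := fun t _ => t ≤ a + (n:ℤ) → spA k A ((Gr k n A a).filter (fun x => x < t)) = spA k A (Finset.Ico a t)) ?_ ?_ t ht
  ·
    intro _
    have h1 : (Gr k n A a).filter (fun x => x < a) = ∅ := by
      apply Finset.filter_eq_empty_iff.2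
      intro x hx
      have := (mem_Gr.1 hx).1
      simp [Finset.mem_Ico] at this
      omega
    rw [h1, Finset.Ico_self]
  · intro t ht IH
    intro hta
    have IH' := IH (by omega)
    have hIco : Finset.Ico a (t+1) = insert t (Finset.Ico a t) := by
      ext x; simp [Finset.mem_Ico, Finset.mem_insert]; omega
    by_cases hmem : t ∈ Gr k n A a
    · have hfil : (Gr k n A a).filter (fun x => x < t+1)
          = insert t ((Gr k n A a).filter (fun x => x < t)) := by
        ext x
        simp only [Finset.mem_filter, Finset.mem_insert]
        constructor
        · rintro ⟨hxG, hxlt⟩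
          rcases (by omega : x = t ∨ x < t) with rfl | h
          · exact Or.inl rfl
          · exact Or.inr ⟨hxG, h⟩
        · rintro (rfl | ⟨hxG, h⟩)
          · exact ⟨hmem, by omega⟩
          · exact ⟨hxG, by omega⟩
      rw [hfil, hIco, spA_insert, spA_insert, IH']
    · have ht' : t ∈ Finset.Ico a (a + (n:ℤ)) := by simp [Finset.mem_Ico]; omega
      have hAt : A t ∈ spA k A (Finset.Ico a t) := by
        by_contra hc
        exact hmem (mem_Gr.2 ⟨ht', hc⟩)
      have hfil : (Gr k n A a).filter (fun x => x < t+1)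
          = (Gr k n A a).filter (fun x => x < t) := by
        ext x
        simp only [Finset.mem_filter]
        constructor
        · rintro ⟨hxG, hxlt⟩
          refine ⟨hxG, ?_⟩
          rcases (by omega : x = t ∨ x < t) with rfl | h
          · exact absurd hxG hmem
          · exact h
        · rintro ⟨hxG, h⟩
          exact ⟨hxG, by omega⟩
      rw [hfil, hIco, spA_insert, IH', sup_eq_right.2]
      rwa [Submodule.span_singleton_le_iff_mem]

lemma Kr_span {A : ℤ → Fin k → ℂ} (a : ℤ) :
    ∀ s, s ≤ a → a - (n:ℤ) ≤ s →
      spA k A ((Kr k n A a).filter (fun x => s < x)) = spA k A (Finset.Ioc s a) := by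
  classical
  intro s hs
  refine Int.le_induction_down (motive := fun s _ => a - (n:ℤ) ≤ s → spA k A ((Kr k n A a).filter (fun x => s < x)) = spA k A (Finset.Ioc s a)) ?_ ?_ s hs
  ·
    intro _
    have h1 : (Kr k n A a).filter (fun x => a < x) = ∅ := by
      apply Finset.filter_eq_empty_iff.2
      intro x hx
      have := (mem_Kr.1 hx).1
      simp [Finset.mem_Ioc] at this
      omega
    rw [h1, Finset.Ioc_self]
  · intro s hs IH
    intro hsa
    have IH' := IH (by omega)
    have hIoc : Finset.Ioc (s-1) a = insert s (Finset.Ioc s a) := by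
      ext x; simp [Finset.mem_Ioc, Finset.mem_insert]; omega
    by_cases hmem : s ∈ Kr k n A a
    · have hfil : (Kr k n A a).filter (fun x => s-1 < x)
          = insert s ((Kr k n A a).filter (fun x => s < x)) := by
        ext x
        simp only [Finset.mem_filter, Finset.mem_insert]
        constructor
        · rintro ⟨hxG, hxlt⟩
          rcases (by omega : x = s ∨ s < x) with rfl | h
          · exact Or.inl rfl
          · exact Or.inr ⟨hxG, h⟩
        · rintro (rfl | ⟨hxG, h⟩)
          · exact ⟨hmem, by omega⟩
          · exact ⟨hxG, by omega⟩
      rw [hfil, hIoc, spA_insert, spA_insert, IH']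
    · have hs' : s ∈ Finset.Ioc (a - (n:ℤ)) a := by simp [Finset.mem_Ioc]; omega
      have hAs : A s ∈ spA k A (Finset.Ioc s a) := by
        by_contra hc
        exact hmem (mem_Kr.2 ⟨hs', hc⟩)
      have hfil : (Kr k n A a).filter (fun x => s-1 < x)
          = (Kr k n A a).filter (fun x => s < x) := by
        ext x
        simp only [Finset.mem_filter]
        constructor
        · rintro ⟨hxG, hxlt⟩
          refine ⟨hxG, ?_⟩
          rcases (by omega : x = s ∨ s < x) with rfl | h
          · exact absurd hxG hmem
          · exact h
        · rintro ⟨hxG, h⟩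
          exact ⟨hxG, by omega⟩
      rw [hfil, hIoc, spA_insert, IH', sup_eq_right.2]
      rwa [Submodule.span_singleton_le_iff_mem]

lemma Gr_indep {A : ℤ → Fin k → ℂ} (a : ℤ) : IndepOn k A (Gr k n A a) := by
  apply indepOn_of_not_mem_span_lt
  intro i hi hmem
  obtain ⟨hIco, hnot⟩ := mem_Gr.1 hi
  apply hnot
  refine spA_mono ?_ hmem
  intro x hx
  obtain ⟨hxG, hxlt⟩ := Finset.mem_filter.1 hx
  have := (mem_Gr.1 hxG).1
  simp only [Finset.mem_Ico] at this ⊢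
  omega

lemma Kr_indep {A : ℤ → Fin k → ℂ} (a : ℤ) : IndepOn k A (Kr k n A a) := by
  apply indepOn_of_not_mem_span_gt
  intro i hi hmem
  obtain ⟨hIoc, hnot⟩ := mem_Kr.1 hi
  apply hnot
  refine spA_mono ?_ hmem
  intro x hx
  obtain ⟨hxG, hxlt⟩ := Finset.mem_filter.1 hx
  have := (mem_Kr.1 hxG).1
  simp only [Finset.mem_Ioc] at this ⊢
  omega

lemma Gr_span_top {A : ℤ → Fin k → ℂ} (hper : ColPeriodic k n A) (hrank : FullRank k A)
    (hn : 0 < n) (a : ℤ) : spA k A (Gr k n A a) = ⊤ := by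
  have hfil : (Gr k n A a).filter (fun x => x < a + (n:ℤ)) = Gr k n A a := by
    apply Finset.filter_true_of_mem
    intro x hx
    have := (mem_Gr.1 hx).1
    simp only [Finset.mem_Ico] at this
    omega
  rw [← hfil, Gr_span a (a + (n:ℤ)) (by omega) le_rfl, window_top hper hrank hn]

lemma Kr_span_top {A : ℤ → Fin k → ℂ} (hper : ColPeriodic k n A) (hrank : FullRank k A)
    (hn : 0 < n) (a : ℤ) : spA k A (Kr k n A a) = ⊤ := by
  have hfil : (Kr k n A a).filter (fun x => a - (n:ℤ) < x) = Kr k n A a := by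
    apply Finset.filter_true_of_mem
    intro x hx
    have := (mem_Kr.1 hx).1
    simp only [Finset.mem_Ioc] at this
    omega
  rw [← hfil, Kr_span a (a - (n:ℤ)) (by omega) le_rfl, window_top' hper hrank hn]

lemma finrank_top_pi : finrank ℂ (⊤ : Submodule ℂ (Fin k → ℂ)) = k := by
  rw [finrank_top]
  simp

lemma Gr_card {A : ℤ → Fin k → ℂ} (hper : ColPeriodic k n A) (hrank : FullRank k A)
    (hn : 0 < n) (a : ℤ) : (Gr k n A a).card = k := by
  have h := finrank_spA_of_indep (Gr_indep (n := n) (A := A) a)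
  rw [Gr_span_top hper hrank hn, finrank_top_pi] at h
  omega

lemma Kr_card {A : ℤ → Fin k → ℂ} (hper : ColPeriodic k n A) (hrank : FullRank k A)
    (hn : 0 < n) (a : ℤ) : (Kr k n A a).card = k := by
  have h := finrank_spA_of_indep (Kr_indep (n := n) (A := A) a)
  rw [Kr_span_top hper hrank hn, finrank_top_pi] at h
  omega

lemma Gr_colBasis {A : ℤ → Fin k → ℂ} (hper : ColPeriodic k n A) (hrank : FullRank k A)
    (hn : 0 < n) (a : ℤ) : IsColBasis k A (Gr k n A a) :=
  ⟨Gr_card hper hrank hn a, Gr_indep a, Gr_span_top hper hrank hn a⟩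

lemma Kr_colBasis {A : ℤ → Fin k → ℂ} (hper : ColPeriodic k n A) (hrank : FullRank k A)
    (hn : 0 < n) (a : ℤ) : IsColBasis k A (Kr k n A a) :=
  ⟨Kr_card hper hrank hn a, Kr_indep a, Kr_span_top hper hrank hn a⟩

end Twist
namespace Twist

open Finset Submodule Module

variable {k n : ℕ}

lemma count_lt_le {A : ℤ → Fin k → ℂ} {a : ℤ} {J : Finset ℤ}
    (hJ : J ⊆ Finset.Ico a (a + (n:ℤ))) (hind : IndepOn k A J)
    {t : ℤ} (hat : a ≤ t) (hta : t ≤ a + (n:ℤ)) :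
    (J.filter (fun x => x < t)).card ≤ ((Gr k n A a).filter (fun x => x < t)).card := by
  classical
  have h1 : ((Gr k n A a).filter (fun x => x < t)).card
      = finrank ℂ (spA k A (Finset.Ico a t)) := by
    rw [← Gr_span a t hat hta]
    exact (finrank_spA_of_indep ((Gr_indep a).subset (Finset.filter_subset _ _))).symm
  have h2 : (J.filter (fun x => x < t)).card ≤ finrank ℂ (spA k A (Finset.Ico a t)) := by
    apply card_le_finrank_of_indep_le (hind.subset (Finset.filter_subset _ _))
    apply spA_mono
    intro x hx
    obtain ⟨hxJ, hxlt⟩ := Finset.mem_filter.1 hx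
    have := hJ hxJ
    simp only [Finset.mem_Ico] at this ⊢
    omega
  omega

lemma filter_ge_card {S : Finset ℤ} (t : ℤ) :
    (S.filter (fun x => t ≤ x)).card + (S.filter (fun x => x < t)).card = S.card := by
  classical
  have := Finset.card_filter_add_card_filter_not (s := S) (p := fun x => t ≤ x)
  simpa [not_le] using this

lemma Gr_minBasis {A : ℤ → Fin k → ℂ} (hper : ColPeriodic k n A) (hrank : FullRank k A)
    (hn : 0 < n) (a : ℤ) : IsMinBasis k n A a (Gr k n A a) := by
  classical
  refine ⟨Gr_subset, Gr_colBasis hper hrank hn a, ?_⟩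
  intro J hJ hJb
  obtain ⟨hJcard, hJind, _⟩ := hJb
  constructor
  · rw [Gr_card hper hrank hn a, hJcard]
  intro t
  have hmain : (J.filter (fun x => x < t)).card ≤ ((Gr k n A a).filter (fun x => x < t)).card := by
    rcases le_or_gt t a with h | h
    · have hempty : J.filter (fun x => x < t) = ∅ := by
        apply Finset.filter_eq_empty_iff.2
        intro x hx
        have := hJ hx
        simp only [Finset.mem_Ico] at this
        omega
      simp [hempty]
    · rcases le_or_gt t (a + (n:ℤ)) with h2 | h2
      · exact count_lt_le hJ hJind h.le h2
      · have hJfull : J.filter (fun x => x < t) = J := by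
          apply Finset.filter_true_of_mem
          intro x hx
          have := hJ hx
          simp only [Finset.mem_Ico] at this
          omega
        have hGfull : (Gr k n A a).filter (fun x => x < t) = Gr k n A a := by
          apply Finset.filter_true_of_mem
          intro x hx
          have := Gr_subset hx
          simp only [Finset.mem_Ico] at this
          omega
        rw [hJfull, hGfull, hJcard, Gr_card hper hrank hn a]
  have e1 := filter_ge_card (S := Gr k n A a) t
  have e2 := filter_ge_card (S := J) t
  rw [Gr_card hper hrank hn a] at e1
  rw [hJcard] at e2
  omega

end Twist
namespace Twist

open Finset Submodule Module

variable {k n : ℕ}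

lemma spA_empty (A : ℤ → Fin k → ℂ) : spA k A (∅ : Finset ℤ) = ⊥ := by
  simp [spA]

lemma mem_Gr_self {A : ℤ → Fin k → ℂ} (hn : 0 < n) {b : ℤ} (hb : A b ≠ 0) :
    b ∈ Gr k n A b := by
  rw [mem_Gr]
  constructor
  · simp [Finset.mem_Ico]; omega
  · rw [Finset.Ico_self, spA_empty]
    simpa using hb

/-- Pairing of the right twist column with its own column. -/
lemma pair_self {A R : ℤ → Fin k → ℂ} (hR : IsRightTwist k n A R)
    (hper : ColPeriodic k n A) (hrank : FullRank k A) (hn : 0 < n)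
    {b : ℤ} (hb : A b ≠ 0) : bil k (R b) (A b) = 1 := by
  have := hR b (Gr k n A b) (Gr_minBasis hper hrank hn b) b (mem_Gr_self hn hb)
  simpa using this

/-- The key orthogonality: if `b < m < b+n` and `A b ∉ span A(Ioc b m)` then
`⟨R b, A m⟩ = 0`. -/
lemma pair_zero {A R : ℤ → Fin k → ℂ} (hR : IsRightTwist k n A R)
    (hper : ColPeriodic k n A) (hrank : FullRank k A) (hn : 0 < n)
    {b m : ℤ} (h1 : b < m) (h2 : m < b + (n:ℤ))
    (h3 : A b ∉ spA k A (Finset.Ioc b m)) : bil k (R b) (A m) = 0 := by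
  classical
  have hRb := hR b (Gr k n A b) (Gr_minBasis hper hrank hn b)
  by_cases hm : m ∈ Gr k n A b
  · rw [hRb m hm, if_neg (by omega)]
  · have hmIco : m ∈ Finset.Ico b (b + (n:ℤ)) := by simp [Finset.mem_Ico]; omega
    have hmem : A m ∈ spA k A ((Gr k n A b).filter (fun x => x < m)) := by
      rw [Gr_span b m h1.le (by omega)]
      by_contra hc
      exact hm (mem_Gr.2 ⟨hmIco, hc⟩)
    obtain ⟨c, hc⟩ := mem_spA_iff.1 hmem
    set S := (Gr k n A b).filter (fun x => x < m) with hS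
    have hbil : bil k (R b) (A m) = ∑ i ∈ S, c i * bil k (R b) (A i) := by
      rw [← hc, bil_sum]
    have hδ : ∀ i ∈ S, bil k (R b) (A i) = if i = b then 1 else 0 := fun i hi =>
      hRb i (Finset.mem_of_mem_filter i hi)
    have hsum : bil k (R b) (A m) = if b ∈ S then c b else 0 := by
      rw [hbil, Finset.sum_congr rfl (fun i hi => by rw [hδ i hi])]
      rw [← Finset.sum_ite_eq' S b c]
      apply Finset.sum_congr rfl
      intro i _
      by_cases hib : i = b <;> simp [hib]
    rw [hsum]
    by_cases hbS : b ∈ S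
    · rw [if_pos hbS]
      by_contra hcb
      apply h3
      have herase : c b • A b + ∑ i ∈ S.erase b, c i • A i = A m :=
        (Finset.add_sum_erase S (fun i => c i • A i) hbS).trans hc
      have h4 : c b • A b = A m - ∑ i ∈ S.erase b, c i • A i := eq_sub_of_add_eq herase
      have : A b = (c b)⁻¹ • (A m - ∑ i ∈ S.erase b, c i • A i) := by
        rw [← h4, inv_smul_smul₀ hcb]
      rw [this]
      apply Submodule.smul_mem
      apply Submodule.sub_mem
      · exact mem_spA (by simp [Finset.mem_Ioc]; omega)
      · apply Submodule.sum_mem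
        intro i hi
        apply Submodule.smul_mem
        apply mem_spA
        have hiS := Finset.mem_of_mem_erase hi
        have hiG := Finset.mem_of_mem_filter i hiS
        have hilt : i < m := (Finset.mem_filter.1 hiS).2
        have hib : i ≠ b := Finset.ne_of_mem_erase hi
        have := Gr_subset hiG
        simp only [Finset.mem_Ico] at this
        simp only [Finset.mem_Ioc]
        omega
    · rw [if_neg hbS]

/-- Orthogonal independent families have complementary sizes. -/
lemma card_add_card_le {v u : ℤ → Fin k → ℂ} {S T : Finset ℤ}
    (hv : IndepOn k v S) (hu : IndepOn k u T)
    (h : ∀ j ∈ S, ∀ m ∈ T, bil k (v j) (u m) = 0) : S.card + T.card ≤ k := by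
  set W := spA k u T with hW
  have hWrank : finrank ℂ W = T.card := finrank_spA_of_indep hu
  have horth : spA k v S ≤ (bform k).orthogonal W := by
    rw [spA, Submodule.span_le]
    rintro _ ⟨j, hj, rfl⟩
    rw [SetLike.mem_coe, LinearMap.BilinForm.mem_orthogonal_iff]
    intro y hy
    show bform k y (v j) = 0
    rw [← bil_eq_bform, ← bil_comm]
    exact bil_eq_zero_of_mem_spA hy (fun b hb => h j (by simpa using hj) b hb)
  have hle := card_le_finrank_of_indep_le hv horth
  rw [LinearMap.BilinForm.finrank_orthogonal bform_nondeg W] at hle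
  have hWle : finrank ℂ W ≤ finrank ℂ (Fin k → ℂ) := W.finrank_le
  have hV : finrank ℂ (Fin k → ℂ) = k := by simp
  omega

end Twist
namespace Twist

open Finset Submodule Module

variable {k n : ℕ}

lemma bil_sum_left (y : Fin k → ℂ) (S : Finset ℤ) (c : ℤ → ℂ) (v : ℤ → Fin k → ℂ) :
    bil k (∑ i ∈ S, c i • v i) y = ∑ i ∈ S, c i * bil k (v i) y := by
  rw [bil_comm, bil_sum]
  exact Finset.sum_congr rfl (fun i _ => by rw [bil_comm])

lemma bil_sub_left (x x' y : Fin k → ℂ) :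
    bil k (x - x') y = bil k x y - bil k x' y := by
  simp [bil, sub_mul, Finset.sum_sub_distrib]

lemma eq_of_pair_eq {R : ℤ → Fin k → ℂ} {x x' : Fin k → ℂ} {S : Finset ℤ}
    (hspan : spA k R S = ⊤)
    (h : ∀ b ∈ S, bil k x (R b) = bil k x' (R b)) : x = x' := by
  have hz : ∀ y, bil k (x - x') y = 0 := by
    intro y
    refine bil_eq_zero_of_mem_spA (A := R) (S := S) (by rw [hspan]; trivial) ?_
    intro b hb
    rw [bil_sub_left, h b hb, sub_self]
  have := bil_eq_zero_of_forall _ hz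
  exact sub_eq_zero.1 this

lemma Kr_nonzero {A : ℤ → Fin k → ℂ} {a i : ℤ} (hi : i ∈ Kr k n A a) : A i ≠ 0 := by
  intro h0
  exact (mem_Kr.1 hi).2 (h0 ▸ Submodule.zero_mem _)

/-- Unitriangular pairing: `⟨R i, A i'⟩ = 0` for `i < i'` both in `Kr a`, `= 1` on the diagonal. -/
lemma pair_Kr {A R : ℤ → Fin k → ℂ} (hR : IsRightTwist k n A R)
    (hper : ColPeriodic k n A) (hrank : FullRank k A) (hn : 0 < n)
    {a i i' : ℤ} (hi : i ∈ Kr k n A a) (hi' : i' ∈ Kr k n A a) (hlt : i < i') :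
    bil k (R i) (A i') = 0 := by
  obtain ⟨hiw, hinot⟩ := mem_Kr.1 hi
  obtain ⟨hi'w, _⟩ := mem_Kr.1 hi'
  simp only [Finset.mem_Ioc] at hiw hi'w
  refine pair_zero hR hper hrank hn hlt (by omega) ?_
  intro hmem
  exact hinot (spA_mono (Finset.Ioc_subset_Ioc_right hi'w.2) hmem)

lemma KrR_indep {A R : ℤ → Fin k → ℂ} (hR : IsRightTwist k n A R)
    (hper : ColPeriodic k n A) (hrank : FullRank k A) (hn : 0 < n) (a : ℤ) :
    IndepOn k R (Kr k n A a) := by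
  classical
  set S := Kr k n A a with hSdef
  rw [IndepOn, Fintype.linearIndependent_iff]
  intro g hg
  set g' : ℤ → ℂ := fun i => if h : i ∈ S then g ⟨i, by simpa using h⟩ else 0 with hg'
  have hsum : ∑ i ∈ S, g' i • R i = 0 := by
    rw [← Finset.sum_coe_sort S (fun i => g' i • R i), ← hg]
    apply Finset.sum_congr rfl
    intro i _
    simp [hg', (by simpa using i.2 : (i : ℤ) ∈ S)]
  by_contra hc
  push_neg at hc
  obtain ⟨j, hj⟩ := hc
  have hP : (S.filter (fun i => g' i ≠ 0)).Nonempty := by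
    refine ⟨j, Finset.mem_filter.2 ⟨by simpa using j.2, ?_⟩⟩
    simpa [hg', (by simpa using j.2 : (j : ℤ) ∈ S)] using hj
  set i0 := (S.filter (fun i => g' i ≠ 0)).max' hP with hi0
  have hi0mem := (S.filter (fun i => g' i ≠ 0)).max'_mem hP
  rw [← hi0, Finset.mem_filter] at hi0mem
  obtain ⟨hi0S, hi0ne⟩ := hi0mem
  have hpair : bil k (∑ i ∈ S, g' i • R i) (A i0) = g' i0 := by
    rw [bil_sum_left]
    have : ∀ i ∈ S, g' i * bil k (R i) (A i0) = if i = i0 then g' i0 else 0 := by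
      intro i hiS
      rcases lt_trichotomy i i0 with h | h | h
      · rw [pair_Kr hR hper hrank hn hiS hi0S h, mul_zero, if_neg (by omega)]
      · subst h
        rw [pair_self hR hper hrank hn (Kr_nonzero hiS), mul_one, if_pos rfl]
      · have : g' i = 0 := by
          by_contra hne
          have := hi0 ▸ Finset.le_max' _ i (Finset.mem_filter.2 ⟨hiS, hne⟩)
          omega
        rw [this, zero_mul, if_neg (by omega)]
    rw [Finset.sum_congr rfl this, Finset.sum_ite_eq' S i0 (fun _ => g' i0), if_pos hi0S]
  rw [hsum] at hpair
  simp only [bil, Pi.zero_apply, zero_mul, Finset.sum_const_zero] at hpair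
  exact hi0ne hpair.symm

lemma KrR_colBasis {A R : ℤ → Fin k → ℂ} (hR : IsRightTwist k n A R)
    (hper : ColPeriodic k n A) (hrank : FullRank k A) (hn : 0 < n) (a : ℤ) :
    IsColBasis k R (Kr k n A a) :=
  ⟨Kr_card hper hrank hn a, KrR_indep hR hper hrank hn a,
    spA_eq_top_of_indep_card (KrR_indep hR hper hrank hn a) (Kr_card hper hrank hn a)⟩

/-- The backward greedy set of `A` is a Gale-maximal column basis for the right twist `R`. -/
lemma KrR_maxBasis {A R : ℤ → Fin k → ℂ} (hR : IsRightTwist k n A R)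
    (hper : ColPeriodic k n A) (hrank : FullRank k A) (hn : 0 < n) (a : ℤ) :
    IsMaxBasis k n R a (Kr k n A a) := by
  refine ⟨Kr_subset, KrR_colBasis hR hper hrank hn a, ?_⟩
  intro J hJ hJb
  obtain ⟨hJcard, hJind, _⟩ := hJb
  refine ⟨hJcard.trans (Kr_card hper hrank hn a).symm, ?_⟩
  intro t
  rcases le_or_gt t (a - (n:ℤ) + 1) with h | h
  · -- both filters full
    have hKfull : (Kr k n A a).filter (fun x => t ≤ x) = Kr k n A a := by
      apply Finset.filter_true_of_mem
      intro x hx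
      have := Kr_subset hx
      simp only [Finset.mem_Ioc] at this
      omega
    have hle : (J.filter (fun x => t ≤ x)).card ≤ J.card := Finset.card_filter_le _ _
    rw [hKfull, Kr_card hper hrank hn a, ← hJcard]
    omega
  · rcases le_or_gt t a with h2 | h2
    · -- main case
      set s := t - 1 with hs
      set Ts := (Gr k n A (s+1)).filter (fun x => a + 1 ≤ x) with hTs
      -- orthogonality
      have horth : ∀ j ∈ J.filter (fun x => t ≤ x), ∀ m ∈ Ts, bil k (R j) (A m) = 0 := by
        intro j hjf m hmf
        obtain ⟨hjJ, hjt⟩ := Finset.mem_filter.1 hjf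
        obtain ⟨hmG, hma⟩ := Finset.mem_filter.1 hmf
        have hjw := hJ hjJ
        simp only [Finset.mem_Ioc] at hjw
        obtain ⟨hmw, hmnot⟩ := mem_Gr.1 hmG
        simp only [Finset.mem_Ico] at hmw
        have hmGj : m ∈ Gr k n A j := by
          rw [mem_Gr]
          constructor
          · simp only [Finset.mem_Ico]; omega
          · intro hmem
            exact hmnot (spA_mono (by
              intro x hx
              simp only [Finset.mem_Ico] at hx ⊢
              omega) hmem)
        have := hR j (Gr k n A j) (Gr_minBasis hper hrank hn j) m hmGj
        rw [this, if_neg (by omega)]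
      -- independence of both families
      have hindJ : IndepOn k R (J.filter (fun x => t ≤ x)) :=
        IndepOn.subset hJind (Finset.filter_subset _ _)
      have hindT : IndepOn k A Ts := (Gr_indep (s+1)).subset (Finset.filter_subset _ _)
      have hcount := card_add_card_le hindJ hindT horth
      -- compute |Ts|
      have hTscard : Ts.card + ((Gr k n A (s+1)).filter (fun x => x < a+1)).card = k := by
        have := filter_ge_card (S := Gr k n A (s+1)) (a+1)
        rw [Gr_card hper hrank hn (s+1)] at this
        exact this
      have hIcoIoc : Finset.Ico (s+1) (a+1) = Finset.Ioc s a := by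
        ext x; simp only [Finset.mem_Ico, Finset.mem_Ioc]; omega
      have hGcount : ((Gr k n A (s+1)).filter (fun x => x < a+1)).card
          = finrank ℂ (spA k A (Finset.Ioc s a)) := by
        rw [← hIcoIoc, ← Gr_span (n := n) (A := A) (s+1) (a+1) (by omega : s+1 ≤ a+1) (by omega : a+1 ≤ s+1+(n:ℤ))]
        exact (finrank_spA_of_indep ((Gr_indep (s+1)).subset (Finset.filter_subset _ _))).symm
      -- compute |Kr filter|
      have hKcount : ((Kr k n A a).filter (fun x => t ≤ x)).card
          = finrank ℂ (spA k A (Finset.Ioc s a)) := by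
        have hfe : (Kr k n A a).filter (fun x => t ≤ x)
            = (Kr k n A a).filter (fun x => s < x) := by
          apply Finset.filter_congr
          intro x _
          constructor <;> (intro; omega)
        rw [hfe, ← Kr_span (n := n) (A := A) a s (by omega : s ≤ a) (by omega : a - (n:ℤ) ≤ s)]
        exact (finrank_spA_of_indep ((Kr_indep a).subset (Finset.filter_subset _ _))).symm
      omega
    · -- t > a: J filter is empty
      have hempty : J.filter (fun x => t ≤ x) = ∅ := by
        apply Finset.filter_eq_empty_iff.2
        intro x hx
        have := hJ hx
        simp only [Finset.mem_Ioc] at this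
        omega
      simp [hempty]

/-- The forward half: a right twist followed by a left twist gives back `A`. -/
lemma main_forward (k n : ℕ) (hk : 1 ≤ k) (hkn : k ≤ n)
    (A : ℤ → Fin k → ℂ) (hper : ColPeriodic k n A) (hrank : FullRank k A)
    (R LR : ℤ → Fin k → ℂ)
    (hR : IsRightTwist k n A R) (hLR : IsLeftTwist k n R LR) : LR = A := by
  have hn : 0 < n := lt_of_lt_of_le hk hkn
  funext a
  have hmax := KrR_maxBasis hR hper hrank hn a
  have h1 := hLR a (Kr k n A a) hmax
  refine eq_of_pair_eq (R := R) (S := Kr k n A a)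
    (spA_eq_top_of_indep_card (KrR_indep hR hper hrank hn a) (Kr_card hper hrank hn a)) ?_
  intro b hb
  rw [h1 b hb]
  obtain ⟨hbw, hbnot⟩ := mem_Kr.1 hb
  simp only [Finset.mem_Ioc] at hbw
  rcases eq_or_lt_of_le hbw.2 with rfl | hba
  · rw [if_pos rfl, bil_comm]
    exact (pair_self hR hper hrank hn (Kr_nonzero hb)).symm
  · rw [if_neg (by omega), bil_comm]
    exact (pair_zero hR hper hrank hn hba (by omega) hbnot).symm

end Twist
namespace Twist

open Finset Submodule Module

variable {k n : ℕ}

/-- Negation of a finite set of integers. -/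
def Ng (S : Finset ℤ) : Finset ℤ := S.image (fun x => -x)

lemma mem_Ng {S : Finset ℤ} {x : ℤ} : x ∈ Ng S ↔ -x ∈ S := by
  simp only [Ng, Finset.mem_image]
  constructor
  · rintro ⟨y, hy, rfl⟩; simpa using hy
  · intro h; exact ⟨-x, h, by ring⟩

lemma Ng_Ng (S : Finset ℤ) : Ng (Ng S) = S := by
  ext x; simp [mem_Ng]

lemma card_Ng (S : Finset ℤ) : (Ng S).card = S.card :=
  Finset.card_image_of_injective _ neg_injective

lemma Ng_subset {S T : Finset ℤ} (h : S ⊆ T) : Ng S ⊆ Ng T :=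
  Finset.image_subset_image h

lemma Ng_filter_card (S : Finset ℤ) (t : ℤ) :
    ((Ng S).filter (fun x => t ≤ x)).card = (S.filter (fun x => x ≤ -t)).card := by
  classical
  rw [show (Ng S).filter (fun x => t ≤ x) = Ng (S.filter (fun x => t ≤ -x)) by
    ext x
    simp only [Finset.mem_filter, mem_Ng]
    constructor <;> (rintro ⟨h1, h2⟩; exact ⟨h1, by omega⟩)]
  rw [card_Ng]
  congr 1
  apply Finset.filter_congr
  intro x _
  constructor <;> (intro; omega)

lemma galeLE_neg {B C : Finset ℤ} (h : galeLE B C) : galeLE (Ng C) (Ng B) := by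
  classical
  obtain ⟨hcard, hcount⟩ := h
  refine ⟨by rw [card_Ng, card_Ng, hcard], ?_⟩
  intro t
  rw [Ng_filter_card, Ng_filter_card]
  have h1 := hcount (-t + 1)
  have e1 := filter_ge_card (S := B) (-t + 1)
  have e2 := filter_ge_card (S := C) (-t + 1)
  have hB : (B.filter (fun x => x ≤ -t)).card = (B.filter (fun x => x < -t + 1)).card := by
    congr 1
    apply Finset.filter_congr
    intro x _
    constructor <;> (intro; omega)
  have hC : (C.filter (fun x => x ≤ -t)).card = (C.filter (fun x => x < -t + 1)).card := by
    congr 1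
    apply Finset.filter_congr
    intro x _
    constructor <;> (intro; omega)
  omega

lemma indepOn_neg {M : ℤ → Fin k → ℂ} {S : Finset ℤ} (h : IndepOn k M S) :
    IndepOn k (fun b => M (-b)) (Ng S) := by
  rw [IndepOn] at h ⊢
  have he : ∀ j : ((Ng S : Finset ℤ) : Set ℤ), (-(j:ℤ)) ∈ ((S : Finset ℤ) : Set ℤ) := by
    intro j
    have := j.2
    rw [Finset.mem_coe] at this ⊢
    exact mem_Ng.1 this
  exact h.comp (fun (j : ((Ng S : Finset ℤ) : Set ℤ)) =>
      (⟨-(j:ℤ), he j⟩ : ((S : Finset ℤ) : Set ℤ)))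
    (fun x y hxy => Subtype.ext (neg_inj.1 (congrArg Subtype.val hxy)))

lemma image_neg_coe (M : ℤ → Fin k → ℂ) (S : Finset ℤ) :
    (fun b => M (-b)) '' ((Ng S : Finset ℤ) : Set ℤ) = M '' (S : Set ℤ) := by
  rw [Ng, Finset.coe_image, ← Set.image_comp]
  have : (fun b => M (-b)) ∘ (fun x : ℤ => -x) = M := funext fun b => by simp
  rw [this]

lemma colBasis_neg {M : ℤ → Fin k → ℂ} {S : Finset ℤ} (h : IsColBasis k M S) :
    IsColBasis k (fun b => M (-b)) (Ng S) := by
  obtain ⟨h1, h2, h3⟩ := h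
  refine ⟨by rw [card_Ng, h1], indepOn_neg h2, ?_⟩
  rw [image_neg_coe]
  exact h3

lemma Ng_Ioc (a b : ℤ) : Ng (Finset.Ioc a b) = Finset.Ico (-b) (-a) := by
  ext x; simp only [mem_Ng, Finset.mem_Ioc, Finset.mem_Ico]; omega

lemma Ng_Ico (a b : ℤ) : Ng (Finset.Ico a b) = Finset.Ioc (-b) (-a) := by
  ext x; simp only [mem_Ng, Finset.mem_Ico, Finset.mem_Ioc]; omega

lemma neg_neg_fun (M : ℤ → Fin k → ℂ) : (fun b => M (-(-b))) = M :=
  funext fun b => by rw [neg_neg]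

lemma maxBasis_neg {M : ℤ → Fin k → ℂ} {a : ℤ} {I : Finset ℤ} (h : IsMaxBasis k n M a I) :
    IsMinBasis k n (fun b => M (-b)) (-a) (Ng I) := by
  obtain ⟨hsub, hbasis, hmax⟩ := h
  have e1 : Ng (Finset.Ioc (a - (n:ℤ)) a) = Finset.Ico (-a) (-a + (n:ℤ)) := by
    ext x; simp only [mem_Ng, Finset.mem_Ioc, Finset.mem_Ico]; omega
  have e2 : Ng (Finset.Ico (-a) (-a + (n:ℤ))) = Finset.Ioc (a - (n:ℤ)) a := by
    ext x; simp only [mem_Ng, Finset.mem_Ioc, Finset.mem_Ico]; omega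
  refine ⟨?_, colBasis_neg hbasis, ?_⟩
  · rw [← e1]
    exact Ng_subset hsub
  · intro J hJ hJb
    have hJ' : Ng J ⊆ Finset.Ioc (a - (n:ℤ)) a := by
      rw [← e2]
      exact Ng_subset hJ
    have hJb' : IsColBasis k M (Ng J) := by
      have := colBasis_neg (M := fun b => M (-b)) hJb
      rwa [neg_neg_fun] at this
    have := galeLE_neg (hmax (Ng J) hJ' hJb')
    rwa [Ng_Ng] at this

lemma minBasis_neg {M : ℤ → Fin k → ℂ} {a : ℤ} {I : Finset ℤ} (h : IsMinBasis k n M a I) :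
    IsMaxBasis k n (fun b => M (-b)) (-a) (Ng I) := by
  obtain ⟨hsub, hbasis, hmin⟩ := h
  have e1 : Ng (Finset.Ico a (a + (n:ℤ))) = Finset.Ioc (-a - (n:ℤ)) (-a) := by
    ext x; simp only [mem_Ng, Finset.mem_Ioc, Finset.mem_Ico]; omega
  have e2 : Ng (Finset.Ioc (-a - (n:ℤ)) (-a)) = Finset.Ico a (a + (n:ℤ)) := by
    ext x; simp only [mem_Ng, Finset.mem_Ioc, Finset.mem_Ico]; omega
  refine ⟨?_, colBasis_neg hbasis, ?_⟩
  · rw [show -a - (n:ℤ) = -a - n from rfl, ← e1]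
    exact Ng_subset hsub
  · intro J hJ hJb
    have hJ' : Ng J ⊆ Finset.Ico a (a + (n:ℤ)) := by
      rw [← e2]
      apply Ng_subset
      intro x hx
      have := hJ hx
      simp only [Finset.mem_Ioc] at this ⊢
      omega
    have hJb' : IsColBasis k M (Ng J) := by
      have := colBasis_neg (M := fun b => M (-b)) hJb
      rwa [neg_neg_fun] at this
    have := galeLE_neg (hmin (Ng J) hJ' hJb')
    rwa [Ng_Ng] at this

lemma colPeriodic_neg {A : ℤ → Fin k → ℂ} (hper : ColPeriodic k n A) :
    ColPeriodic k n (fun b => A (-b)) := by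
  intro a
  show A (-(a + (n:ℤ))) = A (-a)
  have := hper (-a - (n:ℤ))
  rw [show -a - (n:ℤ) + n = -a by ring] at this
  rw [show -(a + (n:ℤ)) = -a - n by ring]
  exact this.symm

lemma fullRank_neg {A : ℤ → Fin k → ℂ} (hrank : FullRank k A) :
    FullRank k (fun b => A (-b)) := by
  rw [FullRank]
  have : Set.range (fun b => A (-b)) = Set.range A := by
    ext x
    constructor
    · rintro ⟨b, rfl⟩; exact ⟨-b, rfl⟩
    · rintro ⟨b, rfl⟩; exact ⟨-b, by simp⟩
  rw [this]
  exact hrank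

lemma leftTwist_neg {A L : ℤ → Fin k → ℂ} (h : IsLeftTwist k n A L) :
    IsRightTwist k n (fun b => A (-b)) (fun b => L (-b)) := by
  intro a I hmin
  have hmax : IsMaxBasis k n A (-a) (Ng I) := by
    have := minBasis_neg hmin
    rwa [neg_neg_fun] at this
  intro b hb
  have hbI : -b ∈ Ng I := mem_Ng.2 (by simpa using hb)
  have := h (-a) (Ng I) hmax (-b) hbI
  rw [show ((fun b => A (-b)) b) = A (-b) from rfl]
  rw [this]
  simp [neg_inj]

lemma rightTwist_neg {A R : ℤ → Fin k → ℂ} (h : IsRightTwist k n A R) :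
    IsLeftTwist k n (fun b => A (-b)) (fun b => R (-b)) := by
  intro a I hmax
  have hmin : IsMinBasis k n A (-a) (Ng I) := by
    have := maxBasis_neg hmax
    rwa [neg_neg_fun] at this
  intro b hb
  have hbI : -b ∈ Ng I := mem_Ng.2 (by simpa using hb)
  have := h (-a) (Ng I) hmin (-b) hbI
  rw [show ((fun b => A (-b)) b) = A (-b) from rfl]
  rw [this]
  simp [neg_inj]

end Twist

/-- the left and right twists are mutually inverse: for
every `k×n` complex matrix `A` of rank `k`, `τ→(τ←(A)) = A` and
`τ←(τ→(A)) = A`. -/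
theorem twists_mutually_inverse
    (k n : ℕ) (hk : 1 ≤ k) (hkn : k ≤ n)
    (A : ℤ → Fin k → ℂ) (hper : ColPeriodic k n A) (hrank : FullRank k A)
    (L RL R LR : ℤ → Fin k → ℂ)
    (hL : IsLeftTwist k n A L) (hRL : IsRightTwist k n L RL)
    (hR : IsRightTwist k n A R) (hLR : IsLeftTwist k n R LR) :
    RL = A ∧ LR = A := by
  constructor
  · have hperA := Twist.colPeriodic_neg hper
    have hrankA := Twist.fullRank_neg hrank
    have hR' := Twist.leftTwist_neg hL
    have hLR' := Twist.rightTwist_neg hRL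
    have hmain := Twist.main_forward k n hk hkn (fun b => A (-b)) hperA hrankA
      (fun b => L (-b)) (fun b => RL (-b)) hR' hLR'
    funext a
    have := congrFun hmain (-a)
    simpa using this
  · exact Twist.main_forward k n hk hkn A hper hrank R LR hR hLR
end

section
/- Twist columns and orthogonal complements: for every a ∈ ℤ, the finite family { τ→(A)_b : b ∈ ℤ, a ⇒_π b } is a basis of the orthogonal complement { v ∈ ℂ^k : ⟨v|w⟩ = 0 for all w ∈ span(A_a, A_{a+1}, …, A_{π(a)−1}) } with respect to the standard symmetric bilinear form. -/
open scoped BigOperators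

/-! ### Auxiliary machinery -/

section Aux
open Submodule Module

variable {k n : ℕ} {A T : ℤ → Fin k → ℂ} {π : ℤ → ℤ}

/-- the standard bilinear form as a `BilinForm` -/
noncomputable def stdB (k : ℕ) : LinearMap.BilinForm ℂ (Fin k → ℂ) :=
  LinearMap.mk₂ ℂ (bil k)
    (fun x x' y => by simp [bil, add_mul, Finset.sum_add_distrib])
    (fun c x y => by simp [bil, Finset.mul_sum, mul_assoc])
    (fun x y y' => by simp [bil, mul_add, Finset.sum_add_distrib])
    (fun c x y => by simp [bil, Finset.mul_sum]; congr 1; ext i; ring)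

@[simp] lemma stdB_apply (x y : Fin k → ℂ) : stdB k x y = bil k x y := rfl

lemma bil_comm (x y : Fin k → ℂ) : bil k x y = bil k y x := by
  simp [bil, mul_comm]

lemma stdB_refl : (stdB k).IsRefl := by
  intro x y h
  rwa [stdB_apply, bil_comm] at h

lemma stdB_nondeg : (stdB k).Nondegenerate := by
  refine ⟨?_, fun v hv => ?_⟩
  · intro v hv
    funext i
    have := hv (Pi.single i 1)
    simpa [bil, Pi.single_apply, mul_ite] using this
  · funext i
    have := hv (Pi.single i 1)
    simpa [bil, Pi.single_apply, ite_mul] using this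

/-- pairing with fixed left argument, as a linear map -/
noncomputable def pairL (k : ℕ) (x : Fin k → ℂ) : (Fin k → ℂ) →ₗ[ℂ] ℂ :=
  stdB k x

/-- pairing with fixed right argument, as a linear map -/
noncomputable def pairR (k : ℕ) (y : Fin k → ℂ) : (Fin k → ℂ) →ₗ[ℂ] ℂ :=
  (stdB k).flip y

@[simp] lemma pairL_apply (x y : Fin k → ℂ) : pairL k x y = bil k x y := rfl
@[simp] lemma pairR_apply (x y : Fin k → ℂ) : pairR k y x = bil k x y := rfl

lemma bil_zero_of_span_right {x : Fin k → ℂ} {s : Set (Fin k → ℂ)}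
    (h : ∀ w ∈ s, bil k x w = 0) {y : Fin k → ℂ}
    (hy : y ∈ Submodule.span ℂ s) : bil k x y = 0 := by
  have hle : Submodule.span ℂ s ≤ LinearMap.ker (pairL k x) :=
    span_le.2 fun w hw => LinearMap.mem_ker.2 (h w hw)
  exact LinearMap.mem_ker.1 (hle hy)

lemma bil_zero_of_span_left {y : Fin k → ℂ} {s : Set (Fin k → ℂ)}
    (h : ∀ w ∈ s, bil k w y = 0) {x : Fin k → ℂ}
    (hx : x ∈ Submodule.span ℂ s) : bil k x y = 0 := by
  have hle : Submodule.span ℂ s ≤ LinearMap.ker (pairR k y) :=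
    span_le.2 fun w hw => LinearMap.mem_ker.2 (h w hw)
  exact LinearMap.mem_ker.1 (hle hx)

/-- span of a window of columns -/
noncomputable def spIco (A : ℤ → Fin k → ℂ) (u m : ℤ) : Submodule ℂ (Fin k → ℂ) :=
  Submodule.span ℂ (A '' Set.Ico u m)

lemma spIco_bot {u m : ℤ} (h : m ≤ u) : spIco A u m = ⊥ := by
  rw [spIco, Set.Ico_eq_empty (by omega), Set.image_empty, Submodule.span_empty]

lemma mem_spIco {u m j : ℤ} (h1 : u ≤ j) (h2 : j < m) : A j ∈ spIco A u m :=
  Submodule.subset_span ⟨j, ⟨h1, h2⟩, rfl⟩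

open Classical in
/-- greedy-from-the-right basis of the window `[u, m)` -/
noncomputable def greedyR (A : ℤ → Fin k → ℂ) (u m : ℤ) : Finset ℤ :=
  (Finset.Ico u m).filter (fun j => A j ∉ spIco A (j + 1) m)

open Classical in
/-- greedy-from-the-left basis of the window `[u, m)` -/
noncomputable def greedyL (A : ℤ → Fin k → ℂ) (u m : ℤ) : Finset ℤ :=
  (Finset.Ico u m).filter (fun j => A j ∉ spIco A u j)

lemma mem_greedyR {u m j : ℤ} :
    j ∈ greedyR A u m ↔ u ≤ j ∧ j < m ∧ A j ∉ spIco A (j + 1) m := by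
  simp [greedyR, Finset.mem_filter, Finset.mem_Ico, and_assoc]

lemma mem_greedyL {u m j : ℤ} :
    j ∈ greedyL A u m ↔ u ≤ j ∧ j < m ∧ A j ∉ spIco A u j := by
  simp [greedyL, Finset.mem_filter, Finset.mem_Ico, and_assoc]

lemma indep_of_eq_empty {s : Finset ℤ} (h : s = ∅) :
    LinearIndependent ℂ (fun j : (s : Set ℤ) => A (j : ℤ)) := by
  subst h
  rw [Finset.coe_empty]
  exact linearIndependent_empty_type

lemma greedyR_spec (A : ℤ → Fin k → ℂ) (m : ℤ) :
    ∀ (d : ℕ) (u : ℤ), m = u + d →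
      LinearIndependent ℂ (fun j : ((greedyR A u m : Finset ℤ) : Set ℤ) => A (j : ℤ)) ∧
      Submodule.span ℂ (A '' ((greedyR A u m : Finset ℤ) : Set ℤ)) = spIco A u m := by
  intro d
  induction d with
  | zero =>
    intro u h
    have he : greedyR A u m = ∅ := by
      apply Finset.eq_empty_of_forall_notMem
      intro j hj
      rw [mem_greedyR] at hj
      omega
    refine ⟨indep_of_eq_empty he, ?_⟩
    rw [he, Finset.coe_empty, Set.image_empty, Submodule.span_empty, spIco_bot (by omega)]
  | succ d ih =>
    intro u h
    obtain ⟨IH1, IH2⟩ := ih (u + 1) (by omega)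
    have hIco : Set.Ico u m = insert u (Set.Ico (u + 1) m) := by
      ext x; simp only [Set.mem_Ico, Set.mem_insert_iff]; omega
    have hspan : spIco A u m = Submodule.span ℂ {A u} ⊔ spIco A (u + 1) m := by
      rw [spIco, hIco, Set.image_insert_eq, Submodule.span_insert]; rfl
    by_cases hc : A u ∈ spIco A (u + 1) m
    · have hset : greedyR A u m = greedyR A (u + 1) m := by
        apply Finset.ext
        intro j
        rw [mem_greedyR, mem_greedyR]
        constructor
        · rintro ⟨h1, h2, h3⟩
          rcases eq_or_ne j u with rfl | hne
          · exact absurd hc h3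
          · exact ⟨by omega, h2, h3⟩
        · rintro ⟨h1, h2, h3⟩
          exact ⟨by omega, h2, h3⟩
      have hsp2 : spIco A u m = spIco A (u + 1) m := by
        rw [hspan]
        exact sup_eq_right.2 ((Submodule.span_singleton_le_iff_mem _ _).2 hc)
      rw [hset, hsp2]
      exact ⟨IH1, IH2⟩
    · have hnm : u ∉ greedyR A (u + 1) m := by
        intro hmem; rw [mem_greedyR] at hmem; omega
      have hset : greedyR A u m = insert u (greedyR A (u + 1) m) := by
        apply Finset.ext
        intro j
        rw [mem_greedyR, Finset.mem_insert, mem_greedyR]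
        constructor
        · rintro ⟨h1, h2, h3⟩
          rcases eq_or_ne j u with rfl | hne
          · exact Or.inl rfl
          · exact Or.inr ⟨by omega, h2, h3⟩
        · rintro (rfl | ⟨h1, h2, h3⟩)
          · exact ⟨le_refl _, by omega, hc⟩
          · exact ⟨by omega, h2, h3⟩
      have hnm' : u ∉ ((greedyR A (u + 1) m : Finset ℤ) : Set ℤ) := by
        simpa using hnm
      constructor
      · rw [hset, Finset.coe_insert]
        refine (linearIndepOn_insert (f := A) hnm').2 ⟨IH1, ?_⟩
        rwa [IH2]
      · rw [hset, Finset.coe_insert, Set.image_insert_eq, Submodule.span_insert, IH2, hspan]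

lemma greedyL_spec (A : ℤ → Fin k → ℂ) (u : ℤ) :
    ∀ (d : ℕ) (m : ℤ), m = u + d →
      LinearIndependent ℂ (fun j : ((greedyL A u m : Finset ℤ) : Set ℤ) => A (j : ℤ)) ∧
      Submodule.span ℂ (A '' ((greedyL A u m : Finset ℤ) : Set ℤ)) = spIco A u m := by
  intro d
  induction d with
  | zero =>
    intro m h
    have he : greedyL A u m = ∅ := by
      apply Finset.eq_empty_of_forall_notMem
      intro j hj
      rw [mem_greedyL] at hj
      omega
    refine ⟨indep_of_eq_empty he, ?_⟩
    rw [he, Finset.coe_empty, Set.image_empty, Submodule.span_empty, spIco_bot (by omega)]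
  | succ d ih =>
    intro m h
    obtain ⟨IH1, IH2⟩ := ih (m - 1) (by omega)
    have hIco : Set.Ico u m = insert (m - 1) (Set.Ico u (m - 1)) := by
      ext x; simp only [Set.mem_Ico, Set.mem_insert_iff]; omega
    have hspan : spIco A u m = Submodule.span ℂ {A (m - 1)} ⊔ spIco A u (m - 1) := by
      rw [spIco, hIco, Set.image_insert_eq, Submodule.span_insert]; rfl
    by_cases hc : A (m - 1) ∈ spIco A u (m - 1)
    · have hset : greedyL A u m = greedyL A u (m - 1) := by
        apply Finset.ext
        intro j
        rw [mem_greedyL, mem_greedyL]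
        constructor
        · rintro ⟨h1, h2, h3⟩
          rcases eq_or_ne j (m - 1) with rfl | hne
          · exact absurd hc h3
          · exact ⟨h1, by omega, h3⟩
        · rintro ⟨h1, h2, h3⟩
          exact ⟨h1, by omega, h3⟩
      have hsp2 : spIco A u m = spIco A u (m - 1) := by
        rw [hspan]
        exact sup_eq_right.2 ((Submodule.span_singleton_le_iff_mem _ _).2 hc)
      rw [hset, hsp2]
      exact ⟨IH1, IH2⟩
    · have hnm : (m - 1) ∉ greedyL A u (m - 1) := by
        intro hmem; rw [mem_greedyL] at hmem; omega
      have hum : u ≤ m - 1 := by omega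
      have hset : greedyL A u m = insert (m - 1) (greedyL A u (m - 1)) := by
        apply Finset.ext
        intro j
        rw [mem_greedyL, Finset.mem_insert, mem_greedyL]
        constructor
        · rintro ⟨h1, h2, h3⟩
          rcases eq_or_ne j (m - 1) with rfl | hne
          · exact Or.inl rfl
          · exact Or.inr ⟨h1, by omega, h3⟩
        · rintro (rfl | ⟨h1, h2, h3⟩)
          · exact ⟨hum, by omega, hc⟩
          · exact ⟨h1, by omega, h3⟩
      have hnm' : (m - 1) ∉ ((greedyL A u (m - 1) : Finset ℤ) : Set ℤ) := by
        simpa using hnm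
      constructor
      · rw [hset, Finset.coe_insert]
        refine (linearIndepOn_insert (f := A) hnm').2 ⟨IH1, ?_⟩
        rwa [IH2]
      · rw [hset, Finset.coe_insert, Set.image_insert_eq, Submodule.span_insert, IH2, hspan]

lemma greedyR_indep (A : ℤ → Fin k → ℂ) (u m : ℤ) :
    LinearIndependent ℂ (fun j : ((greedyR A u m : Finset ℤ) : Set ℤ) => A (j : ℤ)) := by
  rcases le_or_gt u m with h | h
  · exact (greedyR_spec A m (m - u).toNat u (by omega)).1
  · apply indep_of_eq_empty
    apply Finset.eq_empty_of_forall_notMem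
    intro j hj; rw [mem_greedyR] at hj; omega

lemma greedyR_span (A : ℤ → Fin k → ℂ) {u m : ℤ} (h : u ≤ m) :
    Submodule.span ℂ (A '' ((greedyR A u m : Finset ℤ) : Set ℤ)) = spIco A u m :=
  (greedyR_spec A m (m - u).toNat u (by omega)).2

lemma greedyL_indep (A : ℤ → Fin k → ℂ) (u m : ℤ) :
    LinearIndependent ℂ (fun j : ((greedyL A u m : Finset ℤ) : Set ℤ) => A (j : ℤ)) := by
  rcases le_or_gt u m with h | h
  · exact (greedyL_spec A u (m - u).toNat m (by omega)).1
  · apply indep_of_eq_empty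
    apply Finset.eq_empty_of_forall_notMem
    intro j hj; rw [mem_greedyL] at hj; omega

lemma greedyL_span (A : ℤ → Fin k → ℂ) {u m : ℤ} (h : u ≤ m) :
    Submodule.span ℂ (A '' ((greedyL A u m : Finset ℤ) : Set ℤ)) = spIco A u m :=
  (greedyL_spec A u (m - u).toNat m (by omega)).2

lemma per_add_mul (hper : ColPeriodic k n A) : ∀ (t : ℤ) (c : ℤ), A (c + n * t) = A c := by
  intro t
  induction t using Int.induction_on with
  | zero => intro c; simp
  | succ t iht =>
    intro c
    have h1 : c + n * (t + 1) = (c + n * t) + n := by ring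
    rw [h1, hper, iht]
  | pred t iht =>
    intro c
    have h1 : c + n * (-t - 1) + n = c + n * (-t) := by ring
    have := hper (c + n * (-t - 1))
    rw [h1] at this
    rw [← iht c, ← this]

lemma per_of_dvd (hper : ColPeriodic k n A) {c j : ℤ} (h : (n : ℤ) ∣ j - c) : A j = A c := by
  obtain ⟨t, ht⟩ := h
  have : j = c + n * t := by omega
  rw [this, per_add_mul hper]

lemma window_span (hper : ColPeriodic k n A) (hrank : FullRank k A) (hn : 0 < n)
    {u m : ℤ} (h : m = u + n) : spIco A u m = ⊤ := by
  rw [← top_le_iff, ← hrank, Submodule.span_le]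
  rintro x ⟨c, rfl⟩
  have hn' : (0 : ℤ) < n := by exact_mod_cast hn
  set r := (c - u) % (n : ℤ) with hr
  have hr0 : 0 ≤ r := Int.emod_nonneg _ (by omega)
  have hrn : r < n := Int.emod_lt_of_pos _ hn'
  have hdvd : (n : ℤ) ∣ (u + r) - c := by
    have h1 : (n:ℤ) ∣ (c - u) - r := Int.dvd_self_sub_of_emod_eq rfl
    have h2 : (u + r) - c = -((c - u) - r) := by ring
    rw [h2]
    exact dvd_neg.2 h1
  have : A (u + r) = A c := per_of_dvd hper hdvd
  rw [← this]
  exact Submodule.subset_span ⟨u + r, ⟨by omega, by omega⟩, rfl⟩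

lemma card_eq_finrank {s : Finset ℤ} {P : Submodule ℂ (Fin k → ℂ)}
    (hind : LinearIndependent ℂ (fun j : (s : Set ℤ) => A (j : ℤ)))
    (hsp : Submodule.span ℂ (A '' (s : Set ℤ)) = P) :
    s.card = Module.finrank ℂ P := by
  have h1 := finrank_span_eq_card (R := ℂ) hind
  rw [← Set.image_eq_range, hsp] at h1
  rw [h1]
  simp

lemma card_le_finrank {s : Finset ℤ} {P : Submodule ℂ (Fin k → ℂ)}
    (hind : LinearIndependent ℂ (fun j : (s : Set ℤ) => A (j : ℤ)))
    (hmem : ∀ j ∈ s, A j ∈ P) : s.card ≤ Module.finrank ℂ P := by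
  let f : (↑s : Set ℤ) → ↥P := fun j => ⟨A (j : ℤ), hmem (j : ℤ) (by exact_mod_cast j.2)⟩
  have hf : LinearIndependent ℂ f := LinearIndependent.of_comp P.subtype (by exact hind)
  have := hf.fintype_card_le_finrank
  simpa using this

lemma indep_subset {s t : Finset ℤ} (hst : s ⊆ t)
    (h : LinearIndependent ℂ (fun j : (t : Set ℤ) => A (j : ℤ))) :
    LinearIndependent ℂ (fun j : (s : Set ℤ) => A (j : ℤ)) :=
  h.comp (Set.inclusion (by exact_mod_cast hst)) (Set.inclusion_injective _)

lemma Ioc_eq_Ico (b c : ℤ) : Set.Ioc b c = Set.Ico (b + 1) (c + 1) := by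
  ext x; simp only [Set.mem_Ioc, Set.mem_Ico]; omega

/-- characterization of `m ≤ π b` -/
lemma pi_ge_iff (hπ : IsBAP k n A π) {b m : ℤ} (hbm : b < m) (hmbn : m ≤ b + n) :
    m ≤ π b ↔ A b ∉ spIco A (b + 1) m := by
  obtain ⟨h1, h2, h3, h4⟩ := hπ b
  have hIoc : Set.Ioc b (m - 1) = Set.Ico (b + 1) m := by
    ext x; simp only [Set.mem_Ioc, Set.mem_Ico]; omega
  constructor
  · intro hge hmem
    have := h4 (m - 1) (by omega) (by omega) (by rw [hIoc]; exact hmem)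
    omega
  · intro hmem
    by_contra hlt
    apply hmem
    have hsub : Set.Ioc b (π b) ⊆ Set.Ico (b + 1) m := by
      rw [Ioc_eq_Ico]
      exact Set.Ico_subset_Ico_right (by omega)
    exact Submodule.span_mono (Set.image_mono hsub) h3

/-- `π` is injective. -/
lemma pi_ne (hπ : IsBAP k n A π) {b c : ℤ} (hbc : b < c) : π b ≠ π c := by
  intro heq
  obtain ⟨hb1, hb2, hb3, hb4⟩ := hπ b
  obtain ⟨hc1, hc2, hc3, hc4⟩ := hπ c
  set m := π b with hm
  have hcm : c ≤ m := heq ▸ hc1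
  have hbm : b < m := lt_of_lt_of_le hbc hcm
  have hIb : Set.Ioc b m = insert m (Set.Ioc b (m - 1)) := by
    ext x; simp only [Set.mem_Ioc, Set.mem_insert_iff]; omega
  have hb3' : A b ∈ Submodule.span ℂ (insert (A m) (A '' Set.Ioc b (m - 1))) := by
    rw [← Set.image_insert_eq, ← hIb]; exact hb3
  obtain ⟨α, x, hx, hbx⟩ := Submodule.mem_span_insert.1 hb3'
  have hfin : A b ∈ Submodule.span ℂ (A '' Set.Ioc b (m - 1)) := by
    rcases eq_or_lt_of_le hcm with heq' | hcm'
    · have hπc : π c = c := by omega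
      rw [hπc, Set.Ioc_self, Set.image_empty, Submodule.span_empty, Submodule.mem_bot] at hc3
      have hAm0 : A m = 0 := by rw [← heq']; exact hc3
      rw [hbx, hAm0, smul_zero, zero_add]
      exact hx
    · have hIc : Set.Ioc c m = insert m (Set.Ioc c (m - 1)) := by
        ext x; simp only [Set.mem_Ioc, Set.mem_insert_iff]; omega
      have hc3' : A c ∈ Submodule.span ℂ (insert (A m) (A '' Set.Ioc c (m - 1))) := by
        rw [← Set.image_insert_eq, ← hIc, heq]; exact hc3
      obtain ⟨β, y, hy, hcy⟩ := Submodule.mem_span_insert.1 hc3'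
      have hβ : β ≠ 0 := by
        intro h0
        rw [h0, zero_smul, zero_add] at hcy
        have : A c ∈ Submodule.span ℂ (A '' Set.Ioc c (m - 1)) := hcy ▸ hy
        have := hc4 (m - 1) (by omega) (by omega) this
        omega
      have hAm : A m = β⁻¹ • (A c - y) := by
        rw [hcy, add_sub_cancel_right, smul_smul, inv_mul_cancel₀ hβ, one_smul]
      have hmono : Submodule.span ℂ (A '' Set.Ioc c (m - 1)) ≤
          Submodule.span ℂ (A '' Set.Ioc b (m - 1)) :=
        Submodule.span_mono (Set.image_mono (Set.Ioc_subset_Ioc_left (le_of_lt hbc)))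
      have hcmem : A c ∈ Submodule.span ℂ (A '' Set.Ioc b (m - 1)) :=
        Submodule.subset_span ⟨c, ⟨hbc, by omega⟩, rfl⟩
      have hAm' : A m ∈ Submodule.span ℂ (A '' Set.Ioc b (m - 1)) := by
        rw [hAm]
        exact Submodule.smul_mem _ _ (Submodule.sub_mem _ hcmem (hmono hy))
      rw [hbx]
      exact Submodule.add_mem _ (Submodule.smul_mem _ _ hAm') hx
  have := hb4 (m - 1) (by omega) (by omega) hfin
  omega

/-- the greedy-from-the-left set on the window `[b, b+n)` is the minimal basis -/
lemma greedyL_isMinBasis (hn : 0 < n) (hper : ColPeriodic k n A) (hrank : FullRank k A)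
    (b : ℤ) : IsMinBasis k n A b (greedyL A b (b + (n : ℤ))) := by
  classical
  set I := greedyL A b (b + (n : ℤ)) with hI
  have hbn : b ≤ b + (n : ℤ) := by omega
  have hspan : Submodule.span ℂ (A '' (I : Set ℤ)) = ⊤ := by
    rw [hI, greedyL_span A hbn]
    exact window_span hper hrank hn rfl
  have hind : LinearIndependent ℂ (fun j : (I : Set ℤ) => A (j : ℤ)) := greedyL_indep A b _
  have hcard : I.card = k := by
    have h1 := card_eq_finrank hind hspan
    rw [h1, finrank_top, Module.finrank_fintype_fun_eq_card, Fintype.card_fin]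
  refine ⟨?_, ⟨hcard, hind, hspan⟩, ?_⟩
  · intro j hj
    rw [hI, mem_greedyL] at hj
    rw [Finset.mem_Ico]
    exact ⟨hj.1, hj.2.1⟩
  · intro J hJ hJb
    have hJcard : J.card = k := hJb.1
    refine ⟨by rw [hcard, hJcard], ?_⟩
    intro t
    -- it suffices to compare the complements
    have hkey : (J.filter (fun x => x < t)).card ≤ (I.filter (fun x => x < t)).card := by
      rcases le_or_gt (b + (n : ℤ)) t with hge | hlt
      · have hIt : I.filter (fun x => x < t) = I := by
          apply Finset.filter_true_of_mem
          intro j hj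
          rw [hI, mem_greedyL] at hj
          omega
        rw [hIt, hcard]
        calc (J.filter (fun x => x < t)).card ≤ J.card := Finset.card_filter_le _ _
          _ = k := hJcard
      · rcases le_or_gt t b with htb | hbt
        · have : J.filter (fun x => x < t) = ∅ := by
            apply Finset.filter_false_of_mem
            intro j hj
            have := hJ hj
            rw [Finset.mem_Ico] at this
            omega
          rw [this]
          simp
        · have hIt : I.filter (fun x => x < t) = greedyL A b t := by
            apply Finset.ext
            intro j
            rw [Finset.mem_filter, hI, mem_greedyL, mem_greedyL]
            constructor
            · rintro ⟨⟨h1, h2, h3⟩, h4⟩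
              exact ⟨h1, h4, h3⟩
            · rintro ⟨h1, h2, h3⟩
              exact ⟨⟨h1, by omega, h3⟩, h2⟩
          rw [hIt]
          have h1 : (greedyL A b t).card = Module.finrank ℂ (spIco A b t) :=
            card_eq_finrank (greedyL_indep A b t) (greedyL_span A (le_of_lt hbt))
          rw [h1]
          apply card_le_finrank (indep_subset (Finset.filter_subset _ _) hJb.2.1)
          intro j hj
          rw [Finset.mem_filter] at hj
          have := hJ hj.1
          rw [Finset.mem_Ico] at this
          exact mem_spIco this.1 hj.2
    have hIsplit := Finset.card_filter_add_card_filter_not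
      (s := I) (p := fun x => t ≤ x)
    have hJsplit := Finset.card_filter_add_card_filter_not
      (s := J) (p := fun x => t ≤ x)
    have hIneg : (I.filter (fun x => ¬ t ≤ x)) = (I.filter (fun x => x < t)) := by
      apply Finset.filter_congr
      intro x _
      simp [not_le]
    have hJneg : (J.filter (fun x => ¬ t ≤ x)) = (J.filter (fun x => x < t)) := by
      apply Finset.filter_congr
      intro x _
      simp [not_le]
    rw [hIneg] at hIsplit
    rw [hJneg] at hJsplit
    omega

lemma A_ne_zero (hπ : IsBAP k n A π) {b : ℤ} (hb : b < π b) : A b ≠ 0 := by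
  intro h0
  obtain ⟨h1, h2, h3, h4⟩ := hπ b
  have : A b ∈ Submodule.span ℂ (A '' Set.Ioc b b) := by
    rw [h0]; exact Submodule.zero_mem _
  have := h4 b le_rfl (by omega) this
  omega

/-- `b` is a member of its own minimal basis -/
lemma self_mem_greedyL (hn : 0 < n) (hπ : IsBAP k n A π) {b m : ℤ} (hb : b < π b)
    (h1 : b < m) (h2 : m ≤ b + (n : ℤ)) : b ∈ greedyL A b m := by
  rw [mem_greedyL]
  refine ⟨le_refl _, h1, ?_⟩
  rw [spIco_bot (le_refl b), Submodule.mem_bot]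
  exact A_ne_zero hπ hb

/-- Key pairing lemma: the twist column `T b` pairs to zero with `A c` for `b < c < π b`. -/
lemma bil_T_A_zero (hn : 0 < n) (hper : ColPeriodic k n A) (hrank : FullRank k A)
    (hπ : IsBAP k n A π) (hT : IsRightTwist k n A T)
    {b c : ℤ} (hbc : b < c) (hcπ : c < π b) : bil k (T b) (A c) = 0 := by
  classical
  obtain ⟨hb1, hb2, hb3, hb4⟩ := hπ b
  have hbn : b < π b := lt_of_le_of_lt (le_of_lt hbc) hcπ
  set I := greedyL A b (b + (n : ℤ)) with hIdef
  have hMB : IsMinBasis k n A b I := greedyL_isMinBasis hn hper hrank b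
  have hTb := hT b I hMB
  set H := greedyL A b (c + 1) with hHdef
  have hcn : c + 1 ≤ b + (n : ℤ) := by omega
  have hHsub : H ⊆ I := by
    intro j hj
    rw [hHdef, mem_greedyL] at hj
    rw [hIdef, mem_greedyL]
    exact ⟨hj.1, by omega, hj.2.2⟩
  have hbH : b ∈ H := self_mem_greedyL hn hπ hbn (by omega) hcn
  have hAc : A c ∈ Submodule.span ℂ (A '' (H : Set ℤ)) := by
    rw [hHdef, greedyL_span A (by omega : b ≤ c + 1)]
    exact mem_spIco (le_of_lt hbc) (by omega)
  have hins : (H : Set ℤ) = insert b ((H.erase b : Finset ℤ) : Set ℤ) := by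
    rw [← Finset.coe_insert, Finset.insert_erase hbH]
  rw [hins, Set.image_insert_eq] at hAc
  obtain ⟨β, z, hz, hEq⟩ := Submodule.mem_span_insert.1 hAc
  have hβ : β = 0 := by
    by_contra hβne
    have hsub2 : ((H.erase b : Finset ℤ) : Set ℤ) ⊆ Set.Ioc b c := by
      intro j hj
      rw [Finset.mem_coe, Finset.mem_erase] at hj
      obtain ⟨hne, hjH⟩ := hj
      rw [hHdef, mem_greedyL] at hjH
      constructor
      · rcases lt_or_eq_of_le hjH.1 with h | h
        · exact h
        · exact absurd h.symm hne
      · omega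
    have hcmem : A c ∈ Submodule.span ℂ (A '' Set.Ioc b c) :=
      Submodule.subset_span ⟨c, ⟨hbc, le_refl c⟩, rfl⟩
    have hzmem : z ∈ Submodule.span ℂ (A '' Set.Ioc b c) :=
      Submodule.span_mono (Set.image_mono hsub2) hz
    have hAb : A b = β⁻¹ • (A c - z) := by
      rw [hEq, add_sub_cancel_right, smul_smul, inv_mul_cancel₀ hβne, one_smul]
    have hAbmem : A b ∈ Submodule.span ℂ (A '' Set.Ioc b c) := by
      rw [hAb]
      exact Submodule.smul_mem _ _ (Submodule.sub_mem _ hcmem hzmem)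
    have := hb4 c (le_of_lt hbc) (by omega) hAbmem
    omega
  rw [hβ, zero_smul, zero_add] at hEq
  rw [hEq]
  apply bil_zero_of_span_right _ hz
  rintro w ⟨j, hj, rfl⟩
  rw [Finset.mem_coe, Finset.mem_erase] at hj
  have := hTb j (hHsub (Finset.mem_of_mem_erase (Finset.mem_erase.2 hj)))
  rw [this, if_neg hj.1]

lemma bil_T_A_one (hn : 0 < n) (hper : ColPeriodic k n A) (hrank : FullRank k A)
    (hπ : IsBAP k n A π) (hT : IsRightTwist k n A T)
    {b : ℤ} (hb : b < π b) : bil k (T b) (A b) = 1 := by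
  have hMB : IsMinBasis k n A b (greedyL A b (b + (n : ℤ))) :=
    greedyL_isMinBasis hn hper hrank b
  have hbmem : b ∈ greedyL A b (b + (n : ℤ)) := by
    obtain ⟨h1, h2, _, _⟩ := hπ b
    exact self_mem_greedyL hn hπ hb (by omega) (le_refl _)
  have := hT b _ hMB b hbmem
  rwa [if_pos rfl] at this


lemma twist_indep (hn : 0 < n) (hper : ColPeriodic k n A) (hrank : FullRank k A)
    (hπ : IsBAP k n A π) (hT : IsRightTwist k n A T) (a : ℤ) :
    LinearIndependent ℂ
      (fun b : {b : ℤ // b < a ∧ a ≤ π a ∧ π a < π b} => T (b : ℤ)) := by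
  classical
  rw [linearIndependent_iff']
  suffices H : ∀ (N : ℕ) (s : Finset {b : ℤ // b < a ∧ a ≤ π a ∧ π a < π b}),
      s.card = N → ∀ g : {b : ℤ // b < a ∧ a ≤ π a ∧ π a < π b} → ℂ,
      (∑ i ∈ s, g i • T (i : ℤ)) = 0 → ∀ i ∈ s, g i = 0 by
    intro s g hs i hi
    exact H s.card s rfl g hs i hi
  intro N
  induction N with
  | zero =>
    intro s hs g hsum i hi
    rw [Finset.card_eq_zero] at hs
    subst hs
    simp at hi
  | succ N ih =>
    intro s hs g hsum i hi
    obtain ⟨imax, himax, hmax⟩ := s.exists_max_image (fun b => (b : ℤ)) ⟨i, hi⟩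
    have hone : bil k (T (imax : ℤ)) (A (imax : ℤ)) = 1 := by
      apply bil_T_A_one hn hper hrank hπ hT
      have h1 := imax.2.1
      have h2 := imax.2.2.1
      have h3 := imax.2.2.2
      omega
    have hbmax : ∀ b ∈ s, b ≠ imax → bil k (T (b : ℤ)) (A (imax : ℤ)) = 0 := by
      intro b hb hne
      have hlt : (b : ℤ) < (imax : ℤ) :=
        lt_of_le_of_ne (hmax b hb) (fun h => hne (Subtype.ext h))
      apply bil_T_A_zero hn hper hrank hπ hT hlt
      have h1 := imax.2.1
      have h2 := b.2.2.1
      have h3 := b.2.2.2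
      omega
    have h0 := congrArg (pairR k (A (imax : ℤ))) hsum
    simp only [map_sum, map_smul, map_zero, smul_eq_mul, pairR_apply] at h0
    have hval : ∑ b ∈ s, g b * bil k (T (b : ℤ)) (A (imax : ℤ)) = g imax := by
      rw [← Finset.sum_erase_add _ _ himax]
      have herase : ∑ b ∈ s.erase imax, g b * bil k (T (b : ℤ)) (A (imax : ℤ)) = 0 :=
        Finset.sum_eq_zero (fun b hb => by
          rw [hbmax b (Finset.mem_of_mem_erase hb) (Finset.ne_of_mem_erase hb), mul_zero])
      rw [herase, hone, mul_one, zero_add]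
    have hgmax : g imax = 0 := hval.symm.trans h0
    have hsum' : ∑ b ∈ s.erase imax, g b • T (b : ℤ) = 0 := by
      have h2 := Finset.sum_erase_add s (fun b => g b • T (b : ℤ)) himax
      rw [hgmax, zero_smul, add_zero] at h2
      rw [h2]
      exact hsum
    have hcard' : (s.erase imax).card = N := by
      rw [Finset.card_erase_of_mem himax, hs]
      omega
    rcases eq_or_ne i imax with rfl | hne
    · exact hgmax
    · exact ih (s.erase imax) hcard' g hsum' i (Finset.mem_erase.2 ⟨hne, hi⟩)

end Aux

/-- twist columns and orthogonal complements: for every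
`a`, the finite family `{τ→(A) b : a ⇒_π b}` is a basis of the orthogonal
complement of `span(A a, A (a+1), …, A (π a - 1))` with respect to the
standard symmetric bilinear form: it is linearly independent and its span is
exactly `{v : ⟨v|w⟩ = 0 for all w in that span}`.  Here `a ⇒_π b` means
`b < a ≤ π a < π b`. -/
theorem twist_orthocomplement
    (k n : ℕ) (hk : 1 ≤ k) (hkn : k ≤ n)
    (A : ℤ → Fin k → ℂ) (hper : ColPeriodic k n A) (hrank : FullRank k A)
    (π : ℤ → ℤ) (hπ : IsBAP k n A π)
    (T : ℤ → Fin k → ℂ) (hT : IsRightTwist k n A T)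
    (a : ℤ) :
    LinearIndependent ℂ
      (fun b : {b : ℤ // b < a ∧ a ≤ π a ∧ π a < π b} => T (b : ℤ)) ∧
    ∀ v : Fin k → ℂ,
      v ∈ Submodule.span ℂ (T '' {b : ℤ | b < a ∧ a ≤ π a ∧ π a < π b}) ↔
      ∀ w ∈ Submodule.span ℂ (A '' Set.Ico a (π a)), bil k v w = 0 := by
  classical
  have hn : 0 < n := lt_of_lt_of_le hk hkn
  obtain ⟨ha1, ha2, ha3, ha4⟩ := hπ a
  set W : Submodule ℂ (Fin k → ℂ) := spIco A a (π a) with hW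
  set Sset : Set ℤ := {b : ℤ | b < a ∧ a ≤ π a ∧ π a < π b} with hSset
  set Sf : Finset ℤ := (Finset.Ico (π a - (n : ℤ)) a).filter (fun b => π a < π b) with hSf
  have hSfSet : (Sf : Set ℤ) = Sset := by
    ext b
    simp only [hSf, Finset.coe_filter, Finset.mem_Ico, Set.mem_setOf_eq, hSset]
    constructor
    · rintro ⟨⟨h1, h2⟩, h3⟩
      exact ⟨h2, ha1, h3⟩
    · rintro ⟨h1, h2, h3⟩
      have hb2 := (hπ b).2.1
      exact ⟨⟨by omega, h1⟩, h3⟩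
  have hindep : LinearIndependent ℂ
      (fun b : {b : ℤ // b < a ∧ a ≤ π a ∧ π a < π b} => T (b : ℤ)) :=
    twist_indep hn hper hrank hπ hT a
  refine ⟨hindep, ?_⟩
  set Wp : Submodule ℂ (Fin k → ℂ) := (stdB k).orthogonal W with hWp
  have hmemWp : ∀ v : Fin k → ℂ, v ∈ Wp ↔
      ∀ w ∈ Submodule.span ℂ (A '' Set.Ico a (π a)), bil k v w = 0 := by
    intro v
    rw [hWp, LinearMap.BilinForm.mem_orthogonal_iff]
    constructor
    · intro h w hw
      rw [bil_comm]
      exact h w hw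
    · intro h w hw
      show bil k w v = 0
      rw [bil_comm]
      exact h w hw
  have hle : Submodule.span ℂ (T '' Sset) ≤ Wp := by
    rw [Submodule.span_le]
    rintro x ⟨b, hb, rfl⟩
    rw [SetLike.mem_coe, hmemWp]
    intro w hw
    apply bil_zero_of_span_right _ hw
    rintro w' ⟨c, hc, rfl⟩
    obtain ⟨hb1, hb2, hb3⟩ := hb
    obtain ⟨hc1, hc2⟩ := hc
    exact bil_T_A_zero hn hper hrank hπ hT (by omega) (by omega)
  have hWfin : Module.finrank ℂ W = (greedyR A a (π a)).card :=
    (card_eq_finrank (greedyR_indep A a (π a)) (greedyR_span A ha1)).symm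
  have hfull : (greedyR A (π a - (n : ℤ)) (π a)).card = k := by
    have h1 := card_eq_finrank (greedyR_indep A (π a - (n : ℤ)) (π a))
      (greedyR_span A (by omega))
    rw [window_span hper hrank hn (by omega)] at h1
    rw [h1, finrank_top, Module.finrank_fintype_fun_eq_card, Fintype.card_fin]
  have hsplit : greedyR A (π a - (n : ℤ)) (π a) = Sf ∪ greedyR A a (π a) := by
    apply Finset.ext
    intro j
    rw [mem_greedyR, Finset.mem_union, hSf, Finset.mem_filter, Finset.mem_Ico, mem_greedyR]
    constructor
    · rintro ⟨h1, h2, h3⟩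
      have hcond : (π a : ℤ) ≤ π j := (pi_ge_iff hπ h2 (by omega)).2 h3
      rcases lt_or_ge j a with hja | haj
      · left
        have hne := pi_ne hπ hja
        exact ⟨⟨h1, hja⟩, by omega⟩
      · right
        exact ⟨haj, h2, h3⟩
    · rintro (⟨⟨h1, h2⟩, h3⟩ | ⟨h1, h2, h3⟩)
      · have hπj := (hπ j).2.1
        refine ⟨h1, by omega, ?_⟩
        exact (pi_ge_iff hπ (by omega) (by omega)).1 (by omega)
      · exact ⟨by omega, h2, h3⟩
  have hdisj : Disjoint Sf (greedyR A a (π a)) := by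
    rw [Finset.disjoint_left]
    intro j hj1 hj2
    rw [hSf, Finset.mem_filter, Finset.mem_Ico] at hj1
    rw [mem_greedyR] at hj2
    omega
  have hcount : Sf.card + (greedyR A a (π a)).card = k := by
    rw [← Finset.card_union_of_disjoint hdisj, ← hsplit, hfull]
  have hWpfin : Module.finrank ℂ Wp = k - Module.finrank ℂ W := by
    rw [hWp, LinearMap.BilinForm.finrank_orthogonal stdB_nondeg W,
      Module.finrank_fintype_fun_eq_card, Fintype.card_fin]
  have hTfin : Module.finrank ℂ (Submodule.span ℂ (T '' Sset)) = Sf.card := by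
    rw [← hSfSet]
    have hindf : LinearIndependent ℂ (fun b : ((Sf : Finset ℤ) : Set ℤ) => T (b : ℤ)) := by
      rw [hSfSet]
      exact hindep
    have h2 := finrank_span_eq_card (R := ℂ) hindf
    rw [← Set.image_eq_range] at h2
    rw [h2]
    simp
  have heqfin : Module.finrank ℂ Wp ≤ Module.finrank ℂ (Submodule.span ℂ (T '' Sset)) := by
    rw [hWpfin, hTfin, hWfin]
    omega
  have hEq : Submodule.span ℂ (T '' Sset) = Wp :=
    Submodule.eq_of_le_of_finrank_le hle heqfin
  intro v
  rw [hEq]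
  exact hmemWp v
end
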